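/- arXiv:1803.06284 — 3 statements merged into one kernel-verified Lean document; each statement's English description precedes it below -/
import Mathlib

section
/- Let E be a real Banach space, let V ⊆ ℝⁿ be an open set that is star-convex with respect to a point y ∈ V, and let a : V → E be infinitely Fréchet differentiable (smooth) on V. Then a(x) = a(y) + Σᵢ (xᵢ − yᵢ) gᵢ(x) for all x ∈ V, where gᵢ(x) = ∫₀¹ ∂ᵢa(y + s(x − y)) ds; each gᵢ : V → E is smooth and satisfies gᵢ(y) = ∂ᵢa(y). -/
open Set MeasureTheory intervalIntegral

section HadamardAux

universe u

variable {n : ℕ} {V : Set (Fin n → ℝ)} {y : Fin n → ℝ}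

private lemma seg_mem (hstar : StarConvex ℝ y V) {x : Fin n → ℝ} (hx : x ∈ V)
    {s : ℝ} (hs : s ∈ Icc (0:ℝ) 1) : y + s • (x - y) ∈ V := by
  have h := hstar hx (a := 1 - s) (b := s) (by linarith [hs.2]) hs.1 (by ring)
  have he : (1 - s) • y + s • x = y + s • (x - y) := by
    rw [smul_sub, sub_smul, one_smul]; abel
  rwa [he] at h

private lemma tube (hV : IsOpen V) (hstar : StarConvex ℝ y V) {x₀ : Fin n → ℝ}
    (hx₀ : x₀ ∈ V) :
    ∃ ε > 0, ∀ x ∈ Metric.closedBall x₀ ε, ∀ s ∈ Icc (0:ℝ) 1, y + s • (x - y) ∈ V := by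
  set Φ : ℝ × (Fin n → ℝ) → (Fin n → ℝ) := fun p => y + p.1 • (p.2 - y) with hΦdef
  have hΦ : Continuous Φ := by fun_prop
  have hsub : Icc (0:ℝ) 1 ×ˢ ({x₀} : Set (Fin n → ℝ)) ⊆ Φ ⁻¹' V := by
    rintro ⟨s, x⟩ ⟨hs, hx⟩
    rcases hx with rfl
    exact seg_mem hstar hx₀ hs
  obtain ⟨u, v, hu, hv, hKu, hx₀v, huv⟩ :=
    generalized_tube_lemma isCompact_Icc isCompact_singleton (hV.preimage hΦ) hsub
  obtain ⟨δ, δpos, hδ⟩ := Metric.isOpen_iff.1 hv x₀ (hx₀v rfl)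
  refine ⟨δ / 2, by positivity, fun x hx s hs => ?_⟩
  have hxv : x ∈ v := hδ (lt_of_le_of_lt (Metric.mem_closedBall.1 hx) (by linarith))
  exact huv (Set.mk_mem_prod (hKu hs) hxv)

private lemma line_hasFDerivAt (y : Fin n → ℝ) (t : ℝ) (x : Fin n → ℝ) :
    HasFDerivAt (fun z => y + t • (z - y)) (t • ContinuousLinearMap.id ℝ (Fin n → ℝ)) x :=
  (((hasFDerivAt_id x).sub_const y).const_smul t).const_add y

variable {F : Type u} [NormedAddCommGroup F] [NormedSpace ℝ F] [CompleteSpace F]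

private lemma integrand_hasFDerivAt (hV : IsOpen V) {b : (Fin n → ℝ) → F}
    (hb : ContDiffOn ℝ (⊤ : ℕ∞) b V) (k : ℕ) {t : ℝ} {x : Fin n → ℝ}
    (hmem : y + t • (x - y) ∈ V) :
    HasFDerivAt (fun x => t ^ k • b (y + t • (x - y)))
      ((t ^ (k + 1)) • fderiv ℝ b (y + t • (x - y))) x := by
  have hdiff : DifferentiableAt ℝ b (y + t • (x - y)) :=
    (hb.differentiableOn (by simp)).differentiableAt (hV.mem_nhds hmem)
  have h := (hdiff.hasFDerivAt.comp x (line_hasFDerivAt y t x)).const_smul (t ^ k)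
  refine h.congr_fderiv ?_
  ext v
  simp [ContinuousLinearMap.smul_apply, ContinuousLinearMap.comp_apply,
    ContinuousLinearMap.id_apply, _root_.map_smul, smul_smul, pow_succ]

set_option maxHeartbeats 1000000 in
private lemma hadamard_hasFDerivAt (hV : IsOpen V) (hstar : StarConvex ℝ y V)
    {b : (Fin n → ℝ) → F} (hb : ContDiffOn ℝ (⊤ : ℕ∞) b V) (k : ℕ) {x₀ : Fin n → ℝ}
    (hx₀ : x₀ ∈ V) :
    HasFDerivAt (fun x => ∫ s in (0:ℝ)..1, s ^ k • b (y + s • (x - y)))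
      (∫ s in (0:ℝ)..1, s ^ (k + 1) • fderiv ℝ b (y + s • (x₀ - y))) x₀ := by
  obtain ⟨ε, εpos, hε⟩ := tube hV hstar hx₀
  have hb' : ContDiffOn ℝ (⊤ : ℕ∞) (fderiv ℝ b) V :=
    ((contDiffOn_infty_iff_fderiv_of_isOpen hV).1 hb).2
  have hcontb : ContinuousOn b V := hb.continuousOn
  have hcontD : ContinuousOn (fderiv ℝ b) V := hb'.continuousOn
  set K : Set (Fin n → ℝ) :=
    (fun p : ℝ × (Fin n → ℝ) => y + p.1 • (p.2 - y)) '' (Icc 0 1 ×ˢ Metric.closedBall x₀ ε)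
    with hKdef
  have hKc : IsCompact K :=
    ((isCompact_Icc).prod (isCompact_closedBall x₀ ε)).image (by fun_prop)
  have hKV : K ⊆ V := by
    rintro _ ⟨⟨s, x⟩, ⟨hs, hx⟩, rfl⟩
    exact hε x hx s hs
  obtain ⟨M₀, hM₀⟩ := hKc.exists_bound_of_continuousOn (hcontD.mono hKV)
  set M : ℝ := |M₀| + 1 with hMdef
  have hMpos : 0 < M := by positivity
  have hM : ∀ z ∈ K, ‖fderiv ℝ b z‖ ≤ M := fun z hz =>
    le_trans (hM₀ z hz) (by rw [hMdef]; linarith [le_abs_self M₀])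
  have hmemK : ∀ x ∈ Metric.closedBall x₀ ε, ∀ s ∈ Icc (0:ℝ) 1, y + s • (x - y) ∈ K :=
    fun x hx s hs => ⟨(s, x), ⟨hs, hx⟩, rfl⟩
  have hx₀ball : x₀ ∈ Metric.closedBall x₀ ε := Metric.mem_closedBall_self εpos.le
  have hIoc : Set.uIoc (0:ℝ) 1 = Ioc 0 1 := uIoc_of_le zero_le_one
  have hlinecont : ∀ x : Fin n → ℝ, Continuous (fun s : ℝ => y + s • (x - y)) := by
    intro x; fun_prop
  have key := hasFDerivAt_integral_of_dominated_loc_of_lip_interval (μ := volume)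
    (F := fun x t => t ^ k • b (y + t • (x - y)))
    (F' := fun t => t ^ (k + 1) • fderiv ℝ b (y + t • (x₀ - y)))
    (x₀ := x₀) (a := 0) (b := 1) (bound := fun _ => M) (Metric.ball_mem_nhds x₀ εpos)
    ?_ ?_ ?_ ?_ ?_ ?_
  · exact key.2
  · filter_upwards [Metric.ball_mem_nhds x₀ εpos] with x hx
    have hcF : ContinuousOn (fun t : ℝ => t ^ k • b (y + t • (x - y))) (Icc 0 1) := by
      apply ContinuousOn.smul (by fun_prop)
      exact hcontb.comp (hlinecont x).continuousOn
        (fun s hs => hε x (Metric.ball_subset_closedBall hx) s hs)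
    exact (hcF.aestronglyMeasurable_of_isCompact isCompact_Icc
      measurableSet_Icc).mono_measure
      (Measure.restrict_mono (by rw [hIoc]; exact Ioc_subset_Icc_self) le_rfl)
  · apply ContinuousOn.intervalIntegrable
    rw [uIcc_of_le zero_le_one]
    apply ContinuousOn.smul (by fun_prop)
    exact hcontb.comp (hlinecont x₀).continuousOn (fun s hs => hε x₀ hx₀ball s hs)
  · have hcF' : ContinuousOn
        (fun t : ℝ => t ^ (k + 1) • fderiv ℝ b (y + t • (x₀ - y))) (Icc 0 1) := by
      refine ContinuousOn.smul (continuous_pow (k + 1)).continuousOn ?_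
      exact hcontD.comp (hlinecont x₀).continuousOn
        (fun s hs => hε x₀ hx₀ball s hs)
    exact (hcF'.aestronglyMeasurable_of_isCompact isCompact_Icc
      measurableSet_Icc).mono_measure
      (Measure.restrict_mono (by rw [hIoc]; exact Ioc_subset_Icc_self) le_rfl)
  · rw [ae_restrict_iff' (by rw [hIoc]; exact measurableSet_Ioc)]
    refine Filter.Eventually.of_forall (fun t ht => ?_)
    rw [hIoc] at ht
    have htIcc : t ∈ Icc (0:ℝ) 1 := Ioc_subset_Icc_self ht
    apply (convex_ball x₀ ε).lipschitzOnWith_of_nnnorm_hasFDerivWithin_le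
      (f' := fun x => t ^ (k + 1) • fderiv ℝ b (y + t • (x - y)))
    · intro x hx
      exact (integrand_hasFDerivAt hV hb k
        (hε x (Metric.ball_subset_closedBall hx) t htIcc)).hasFDerivWithinAt
    · intro x hx
      rw [← NNReal.coe_le_coe]
      simp only [coe_nnnorm, Real.coe_nnabs]
      have h2 : ‖t ^ (k + 1)‖ ≤ 1 := by
        rw [Real.norm_eq_abs, abs_pow]
        exact pow_le_one₀ (abs_nonneg t) (abs_le.2 ⟨by linarith [ht.1], htIcc.2⟩)
      have h3 : ‖fderiv ℝ b (y + t • (x - y))‖ ≤ M :=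
        hM _ (hmemK x (Metric.ball_subset_closedBall hx) t htIcc)
      rw [abs_of_pos hMpos]
      calc ‖t ^ (k + 1) • fderiv ℝ b (y + t • (x - y))‖
          ≤ ‖t ^ (k + 1)‖ * ‖fderiv ℝ b (y + t • (x - y))‖ :=
            ContinuousLinearMap.opNorm_smul_le _ _
        _ ≤ 1 * ‖fderiv ℝ b (y + t • (x - y))‖ := by
            apply mul_le_mul_of_nonneg_right h2 (norm_nonneg _)
        _ = ‖fderiv ℝ b (y + t • (x - y))‖ := one_mul _
        _ ≤ M := h3
  · exact intervalIntegrable_const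
  · rw [ae_restrict_iff' (by rw [hIoc]; exact measurableSet_Ioc)]
    refine Filter.Eventually.of_forall (fun t ht => ?_)
    rw [hIoc] at ht
    exact integrand_hasFDerivAt hV hb k (hε x₀ hx₀ball t (Ioc_subset_Icc_self ht))

private lemma hadamard_aux (hV : IsOpen V) (hstar : StarConvex ℝ y V) (m : ℕ) :
    ∀ {F : Type u} [NormedAddCommGroup F] [NormedSpace ℝ F] [CompleteSpace F]
      (b : (Fin n → ℝ) → F), ContDiffOn ℝ (⊤ : ℕ∞) b V → ∀ k : ℕ,
      ContDiffOn ℝ (m : ℕ) (fun x => ∫ s in (0:ℝ)..1, s ^ k • b (y + s • (x - y))) V := by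
  induction m with
  | zero =>
    intro F _ _ _ b hb k
    simp only [Nat.cast_zero, contDiffOn_zero]
    intro x₀ hx₀
    obtain ⟨ε, εpos, hε⟩ := tube hV hstar hx₀
    set c : ℝ → ℝ := fun s => min (max s 0) 1 with hcdef
    have hc_cont : Continuous c := (continuous_id.max continuous_const).min continuous_const
    have hc_mem : ∀ s, c s ∈ Icc (0:ℝ) 1 :=
      fun s => ⟨le_min (le_max_right s 0) zero_le_one, min_le_right _ _⟩
    have hc_eq : ∀ s ∈ Icc (0:ℝ) 1, c s = s := by
      intro s hs
      rw [hcdef]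
      dsimp only
      rw [max_eq_left hs.1, min_eq_left hs.2]
    set U := Metric.ball x₀ ε with hUdef
    have cont : Continuous (Function.uncurry fun (x : U) (s : ℝ) =>
        (c s) ^ k • b (y + c s • ((x : Fin n → ℝ) - y))) := by
      apply Continuous.smul ((hc_cont.comp continuous_snd).pow k)
      apply hb.continuousOn.comp_continuous
      · exact continuous_const.add ((hc_cont.comp continuous_snd).smul
          ((continuous_subtype_val.comp continuous_fst).sub continuous_const))
      · exact fun p => hε _ (Metric.ball_subset_closedBall p.1.2) _ (hc_mem p.2)
    have cont2 : Continuous (fun x : U => ∫ s in (0:ℝ)..1,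
        (c s) ^ k • b (y + c s • ((x : Fin n → ℝ) - y))) :=
      continuous_parametric_intervalIntegral_of_continuous' cont 0 1
    have heq : (U.domRestrict fun x => ∫ s in (0:ℝ)..1, s ^ k • b (y + s • (x - y)))
        = fun x : U => ∫ s in (0:ℝ)..1, (c s) ^ k • b (y + c s • ((x : Fin n → ℝ) - y)) := by
      funext x
      apply intervalIntegral.integral_congr
      intro s hs
      rw [uIcc_of_le zero_le_one] at hs
      dsimp only
      rw [hc_eq s hs]
    have hContOn : ContinuousOn
        (fun x => ∫ s in (0:ℝ)..1, s ^ k • b (y + s • (x - y))) U := by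
      rw [continuousOn_iff_continuous_restrict, heq]
      exact cont2
    exact (hContOn.continuousAt (Metric.ball_mem_nhds x₀ εpos)).continuousWithinAt
  | succ m ih =>
    intro F _ _ _ b hb k
    have hcast : ((m + 1 : ℕ) : WithTop ℕ∞) = (m : ℕ) + 1 := by push_cast; ring
    rw [hcast, contDiffOn_succ_iff_fderiv_of_isOpen hV]
    refine ⟨fun x hx =>
      (hadamard_hasFDerivAt hV hstar hb k hx).differentiableAt.differentiableWithinAt,
      ?_, ?_⟩
    · intro h; exact absurd h (by simp)
    · have hb' : ContDiffOn ℝ (⊤ : ℕ∞) (fderiv ℝ b) V :=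
        ((contDiffOn_infty_iff_fderiv_of_isOpen hV).1 hb).2
      exact (ih (fderiv ℝ b) hb' (k + 1)).congr
        (fun x hx => (hadamard_hasFDerivAt hV hstar hb k hx).fderiv)

end HadamardAux

/-- **First-order Hadamard-type expansion** for a smooth map from a star-convex open
subset `V ⊆ ℝⁿ` into a real Banach space `E`: for every `x ∈ V`,
`a x = a y + ∑ᵢ (xᵢ - yᵢ) gᵢ(x)` where `gᵢ(x) = ∫₀¹ ∂ᵢa(y + s(x - y)) ds`;
each `gᵢ` is smooth on `V` and `gᵢ(y) = ∂ᵢa(y)`. -/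
theorem hadamard_first_order_expansion
    {n : ℕ} {E : Type*} [NormedAddCommGroup E] [NormedSpace ℝ E] [CompleteSpace E]
    {V : Set (Fin n → ℝ)} (hV : IsOpen V) {y : Fin n → ℝ} (hyV : y ∈ V)
    (hstar : StarConvex ℝ y V) {a : (Fin n → ℝ) → E}
    (ha : ContDiffOn ℝ (⊤ : ℕ∞) a V) :
    (∀ x ∈ V,
      a x = a y + ∑ i, (x i - y i) •
        ∫ s in (0:ℝ)..1, fderiv ℝ a (y + s • (x - y)) (Pi.single i 1)) ∧
    (∀ i : Fin n, ContDiffOn ℝ (⊤ : ℕ∞)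
      (fun x => ∫ s in (0:ℝ)..1, fderiv ℝ a (y + s • (x - y)) (Pi.single i 1)) V) ∧
    (∀ i : Fin n,
      (∫ s in (0:ℝ)..1, fderiv ℝ a (y + s • (y - y)) (Pi.single i 1))
        = fderiv ℝ a y (Pi.single i 1)) := by
  have hD : ContDiffOn ℝ (⊤ : ℕ∞) (fderiv ℝ a) V :=
    ((contDiffOn_infty_iff_fderiv_of_isOpen hV).1 ha).2
  have hDcont : ContinuousOn (fderiv ℝ a) V := hD.continuousOn
  refine ⟨?_, ?_, ?_⟩
  · -- the expansion
    intro x hx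
    have hseg : ∀ s ∈ Icc (0:ℝ) 1, y + s • (x - y) ∈ V := fun s hs => seg_mem hstar hx hs
    have hline : Continuous (fun s : ℝ => y + s • (x - y)) := by fun_prop
    have hcont : ContinuousOn (fun s : ℝ => fderiv ℝ a (y + s • (x - y))) (Icc 0 1) :=
      hDcont.comp hline.continuousOn hseg
    have hFTC : (∫ s in (0:ℝ)..1, fderiv ℝ a (y + s • (x - y)) (x - y)) = a x - a y := by
      have := intervalIntegral.integral_eq_sub_of_hasDerivAt
        (f := fun s : ℝ => a (y + s • (x - y)))
        (f' := fun s : ℝ => fderiv ℝ a (y + s • (x - y)) (x - y))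
        (a := 0) (b := 1) ?_ ?_
      · rw [this]; simp
      · intro t ht
        rw [uIcc_of_le zero_le_one] at ht
        have harg := hseg t ht
        have hd : HasFDerivAt a (fderiv ℝ a (y + t • (x - y))) (y + t • (x - y)) :=
          ((ha.differentiableOn (by simp)).differentiableAt
            (hV.mem_nhds harg)).hasFDerivAt
        have hl : HasDerivAt (fun s : ℝ => y + s • (x - y)) (x - y) t := by
          simpa using ((hasDerivAt_id t).smul_const (x - y)).const_add y
        exact hd.comp_hasDerivAt t hl
      · apply ContinuousOn.intervalIntegrable
        rw [uIcc_of_le zero_le_one]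
        exact hcont.clm_apply continuousOn_const
    have hxy : x - y = ∑ i, (x i - y i) • (Pi.single i (1:ℝ) : Fin n → ℝ) := by
      funext j
      rw [Finset.sum_apply]
      simp [Pi.single_apply]
    have key : ∀ s : ℝ, fderiv ℝ a (y + s • (x - y)) (x - y)
        = ∑ i, (x i - y i) • fderiv ℝ a (y + s • (x - y)) (Pi.single i 1) := by
      intro s
      calc fderiv ℝ a (y + s • (x - y)) (x - y)
          = fderiv ℝ a (y + s • (x - y))
            (∑ i, (x i - y i) • (Pi.single i (1:ℝ) : Fin n → ℝ)) := by rw [← hxy]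
        _ = ∑ i, (x i - y i) • fderiv ℝ a (y + s • (x - y)) (Pi.single i 1) := by
            rw [map_sum]
            exact Finset.sum_congr rfl fun i _ => (fderiv ℝ a _).map_smul _ _
    have hsum : (∫ s in (0:ℝ)..1, fderiv ℝ a (y + s • (x - y)) (x - y))
        = ∑ i, (x i - y i) •
          ∫ s in (0:ℝ)..1, fderiv ℝ a (y + s • (x - y)) (Pi.single i 1) := by
      simp_rw [key]
      rw [intervalIntegral.integral_finset_sum]
      · exact Finset.sum_congr rfl fun i _ => intervalIntegral.integral_smul _ _
      · intro i _
        apply ContinuousOn.intervalIntegrable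
        rw [uIcc_of_le zero_le_one]
        exact continuousOn_const.smul (hcont.clm_apply continuousOn_const)
    rw [← hsum, hFTC]
    abel
  · -- smoothness of the gᵢ
    intro i
    have hc : ContDiffOn ℝ (⊤ : ℕ∞) (fun z => fderiv ℝ a z (Pi.single i 1)) V :=
      (ContinuousLinearMap.apply ℝ E (Pi.single i 1 : Fin n → ℝ)).contDiff.comp_contDiffOn hD
    rw [contDiffOn_infty]
    intro m
    have := hadamard_aux hV hstar m (fun z => fderiv ℝ a z (Pi.single i 1)) hc 0
    refine this.congr fun x hx => ?_
    apply intervalIntegral.integral_congr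
    intro s _
    simp
  · -- value at y
    intro i
    simp only [sub_self, smul_zero, add_zero]
    rw [intervalIntegral.integral_const]
    simp
end

section
/- Let (K,μ) be a probability space and V ⊆ ℝⁿ an open set. Then every derivation ξ of the algebra A(V⊗K) satisfies ξ(a) = Σᵢ ξ(xᵢ) · ∂ᵢa for every a ∈ A(V⊗K), where xᵢ ∈ A(V⊗K) is the i-th coordinate function x ↦ xᵢ·1 and ∂ᵢa is the i-th partial derivative of a. Consequently the map ξ ↦ (ξ(x₁), …, ξ(xₙ)) is an isomorphism of A(V⊗K)-modules from the module Der(A(V⊗K)) of derivations onto A(V⊗K)ⁿ; in particular Der(A(V⊗K)) is a free A(V⊗K)-module of rank n with basis the partial derivatives ∂₁, …, ∂ₙ. -/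
open MeasureTheory Set Metric intervalIntegral
open scoped ENNReal NNReal Topology
set_option linter.unusedSectionVars false
set_option linter.unusedVariables false
set_option maxHeartbeats 1000000

noncomputable section

variable {n : ℕ} {K : Type*} [MeasurableSpace K]

/-- The extension by `0` of a map `a : V → L^∞(K,μ)` to all of `ℝⁿ`. -/
def extZero {μ : Measure K} (V : Set (Fin n → ℝ)) (a : V → Lp ℝ ⊤ μ) :
    (Fin n → ℝ) → Lp ℝ ⊤ μ :=
  fun x => letI := Classical.dec (x ∈ V); if h : x ∈ V then a ⟨x, h⟩ else 0

/-- Membership in the algebra `A(V⊗K)`: a map `a : V → L^∞(K,μ)` is in `A(V⊗K)` iff it is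
infinitely Fréchet differentiable on `V` (a condition depending only on the values on `V`,
expressed via the extension by zero). -/
def MemA {μ : Measure K} (V : Set (Fin n → ℝ)) (a : V → Lp ℝ ⊤ μ) : Prop :=
  ContDiffOn ℝ (⊤ : ℕ∞) (extZero V a) V

/-- The `i`-th partial derivative `∂ᵢa` of an element of `A(V⊗K)`. -/
def partialD {μ : Measure K} (V : Set (Fin n → ℝ)) (i : Fin n) (a : V → Lp ℝ ⊤ μ) :
    V → Lp ℝ ⊤ μ :=
  fun x => fderiv ℝ (extZero V a) (x : Fin n → ℝ) (Pi.single i 1)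

/-- The `i`-th coordinate function `xᵢ ∈ A(V⊗K)`, i.e. `x ↦ xᵢ · 1`. -/
def coordFn (μ : Measure K) [IsProbabilityMeasure μ] (V : Set (Fin n → ℝ)) (i : Fin n) :
    V → Lp ℝ ⊤ μ :=
  fun x => ((x : Fin n → ℝ) i) • MeasureTheory.Lp.const ⊤ μ (1 : ℝ)

/-- `ξ` is a derivation of the algebra `A(V⊗K)` (with the pointwise product `mul` of
`L^∞(K,μ)`-valued functions): it preserves `A(V⊗K)`, is `ℝ`-linear on it, and satisfies the
Leibniz rule `ξ(ab) = a ξ(b) + b ξ(a)`. -/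
def IsDerivationA {μ : Measure K} (V : Set (Fin n → ℝ))
    (mul : Lp ℝ ⊤ μ → Lp ℝ ⊤ μ → Lp ℝ ⊤ μ)
    (ξ : (V → Lp ℝ ⊤ μ) → (V → Lp ℝ ⊤ μ)) : Prop :=
  (∀ a, MemA V a → MemA V (ξ a)) ∧
  (∀ a b, MemA V a → MemA V b → ∀ c : ℝ, ξ (c • a + b) = c • ξ a + ξ b) ∧
  (∀ a b, MemA V a → MemA V b →
    ξ (fun x => mul (a x) (b x)) = fun x => mul (a x) (ξ b x) + mul (b x) (ξ a x))


section CH2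



variable {μ : Measure K}

lemma LinfAeLeNorm (f : Lp ℝ ⊤ μ) : ∀ᵐ k ∂μ, ‖f k‖ ≤ ‖f‖ := by
  have h := ae_le_eLpNormEssSup (f := ⇑f) (μ := μ)
  have hlt : eLpNormEssSup (⇑f) μ < ⊤ := by
    rw [← eLpNorm_exponent_top]; exact Lp.eLpNorm_lt_top f
  filter_upwards [h] with k hk
  have h2 : ((‖f k‖₊ : ℝ≥0∞)).toReal ≤ (eLpNormEssSup (⇑f) μ).toReal :=
    ENNReal.toReal_mono hlt.ne hk
  simpa [Lp.norm_def, eLpNorm_exponent_top] using h2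

lemma LinfNormLe (f : Lp ℝ ⊤ μ) {C : ℝ} (hC : 0 ≤ C) (h : ∀ᵐ k ∂μ, ‖f k‖ ≤ C) : ‖f‖ ≤ C := by
  rw [Lp.norm_def, eLpNorm_exponent_top]
  have h2 := eLpNormEssSup_le_of_ae_bound (f := ⇑f) (μ := μ) h
  calc (eLpNormEssSup (⇑f) μ).toReal ≤ (ENNReal.ofReal C).toReal :=
        ENNReal.toReal_mono ENNReal.ofReal_ne_top h2
    _ = C := ENNReal.toReal_ofReal hC

/-- bounded measurable functions as elements of L∞ -/
def mkLinf (g : K → ℝ) (hg : Measurable g) (C : ℝ) (hb : ∀ k, ‖g k‖ ≤ C) : Lp ℝ ⊤ μ :=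
  (memLp_top_of_bound hg.aestronglyMeasurable C (Filter.Eventually.of_forall hb)).toLp g

lemma mkLinf_coe (g : K → ℝ) (hg : Measurable g) (C : ℝ) (hb : ∀ k, ‖g k‖ ≤ C) :
    ⇑(mkLinf (μ := μ) g hg C hb) =ᵐ[μ] g :=
  MemLp.coeFn_toLp _

section MulAlg
variable [IsProbabilityMeasure μ]
variable (mul : Lp ℝ ⊤ μ → Lp ℝ ⊤ μ → Lp ℝ ⊤ μ)
  (hmul : ∀ u v : Lp ℝ ⊤ μ, ⇑(mul u v) =ᵐ[μ] fun k => u k * v k)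
include hmul

lemma mulComm (u v : Lp ℝ ⊤ μ) : mul u v = mul v u := by
  refine Lp.ext ?_
  filter_upwards [hmul u v, hmul v u] with k h1 h2
  simp only [h1, h2]; ring

lemma mulAssoc (u v w : Lp ℝ ⊤ μ) : mul (mul u v) w = mul u (mul v w) := by
  refine Lp.ext ?_
  filter_upwards [hmul (mul u v) w, hmul u v, hmul u (mul v w), hmul v w] with k h1 h2 h3 h4
  simp only [h1, h2, h3, h4]; ring

lemma mulAddRight (u v w : Lp ℝ ⊤ μ) : mul u (v + w) = mul u v + mul u w := by
  refine Lp.ext ?_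
  filter_upwards [hmul u (v + w), Lp.coeFn_add v w, hmul u v, hmul u w,
    Lp.coeFn_add (mul u v) (mul u w)] with k h1 h2 h3 h4 h5
  simp only [h1, h2, h5, Pi.add_apply, h3, h4]; ring

lemma mulSubRight (u v w : Lp ℝ ⊤ μ) : mul u (v - w) = mul u v - mul u w := by
  refine Lp.ext ?_
  filter_upwards [hmul u (v - w), Lp.coeFn_sub v w, hmul u v, hmul u w,
    Lp.coeFn_sub (mul u v) (mul u w)] with k h1 h2 h3 h4 h5
  simp only [h1, h2, h5, Pi.sub_apply, h3, h4]; ring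

lemma mulSmulRight (c : ℝ) (u v : Lp ℝ ⊤ μ) : mul u (c • v) = c • mul u v := by
  refine Lp.ext ?_
  filter_upwards [hmul u (c • v), Lp.coeFn_smul c v, hmul u v,
    Lp.coeFn_smul c (mul u v)] with k h1 h2 h3 h4
  simp only [h1, h2, h4, Pi.smul_apply, smul_eq_mul, h3]; ring

lemma mulZeroRight (u : Lp ℝ ⊤ μ) : mul u 0 = 0 := by
  refine Lp.ext ?_
  filter_upwards [hmul u 0, Lp.coeFn_zero ℝ ⊤ μ] with k h1 h2
  simp only [h1, h2, Pi.zero_apply]; ring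

lemma oneMul (v : Lp ℝ ⊤ μ) : mul (Lp.const ⊤ μ (1 : ℝ)) v = v := by
  refine Lp.ext ?_
  filter_upwards [hmul (Lp.const ⊤ μ (1:ℝ)) v, Lp.coeFn_const μ (1:ℝ) (p := ⊤)] with k h1 h2
  simp [h1, h2]

lemma smulOneMul (c : ℝ) (v : Lp ℝ ⊤ μ) : mul (c • Lp.const ⊤ μ (1 : ℝ)) v = c • v := by
  refine Lp.ext ?_
  filter_upwards [hmul (c • Lp.const ⊤ μ (1:ℝ)) v, Lp.coeFn_smul c (Lp.const ⊤ μ (1:ℝ)),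
    Lp.coeFn_const μ (1:ℝ) (p := ⊤), Lp.coeFn_smul c v] with k h1 h2 h3 h4
  simp only [h1, h2, h4, Pi.smul_apply, h3, smul_eq_mul, Function.const]; ring

lemma normMulLe (u v : Lp ℝ ⊤ μ) : ‖mul u v‖ ≤ ‖u‖ * ‖v‖ := by
  refine LinfNormLe _ (mul_nonneg (norm_nonneg u) (norm_nonneg v)) ?_
  filter_upwards [hmul u v, LinfAeLeNorm u, LinfAeLeNorm v] with k h1 h2 h3
  rw [h1]
  calc ‖u k * v k‖ = ‖u k‖ * ‖v k‖ := norm_mul _ _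
    _ ≤ ‖u‖ * ‖v‖ := mul_le_mul h2 h3 (norm_nonneg _) (norm_nonneg _)

section Derivation
variable (D : Lp ℝ ⊤ μ → Lp ℝ ⊤ μ)
  (hlin : ∀ (u v : Lp ℝ ⊤ μ) (c : ℝ), D (c • u + v) = c • D u + D v)
  (hleib : ∀ u v : Lp ℝ ⊤ μ, D (mul u v) = mul u (D v) + mul v (D u))
include hlin

lemma derivZero : D 0 = 0 := by
  have h := hlin 0 0 1
  simp only [one_smul, add_zero, smul_zero] at h
  -- h : D 0 = D 0 + D 0
  have h' : D 0 + 0 = D 0 + D 0 := by rw [add_zero]; exact h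
  exact (add_left_cancel h').symm

include hleib

lemma derivIdem (e : Lp ℝ ⊤ μ) (he : mul e e = e) : D e = 0 := by
  have h := hleib e e
  rw [he] at h
  -- h : D e = mul e (D e) + mul e (D e)
  have h2 : mul e (D e) = mul e (D e) + mul e (D e) := by
    calc mul e (D e) = mul e (mul e (D e) + mul e (D e)) := by rw [← h]
      _ = mul e (mul e (D e)) + mul e (mul e (D e)) := mulAddRight mul hmul _ _ _
      _ = mul (mul e e) (D e) + mul (mul e e) (D e) := by
          rw [mulAssoc mul hmul]
      _ = mul e (D e) + mul e (D e) := by rw [he]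
  have h3 : mul e (D e) = 0 := by
    nth_rewrite 1 [← add_zero (mul e (D e))] at h2
    exact (add_left_cancel h2).symm
  rw [h, h3, add_zero]

lemma derivationLinfZero (f : Lp ℝ ⊤ μ) : D f = 0 := by
  by_contra hne
  have hDf : 0 < ‖D f‖ := norm_pos_iff.mpr hne
  set η : ℝ := ‖D f‖ / 2 with hη_def
  have hη : 0 < η := by positivity
  have hηlt : η < ‖D f‖ := by rw [hη_def]; linarith
  -- representatives
  set g : K → ℝ := (Lp.aestronglyMeasurable f).mk ⇑f with hg_def
  have hg_meas : Measurable g := (Lp.aestronglyMeasurable f).stronglyMeasurable_mk.measurable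
  have hg_ae : ⇑f =ᵐ[μ] g := (Lp.aestronglyMeasurable f).ae_eq_mk
  set h : K → ℝ := (Lp.aestronglyMeasurable (D f)).mk ⇑(D f) with hh_def
  have hh_meas : Measurable h := (Lp.aestronglyMeasurable (D f)).stronglyMeasurable_mk.measurable
  have hh_ae : ⇑(D f) =ᵐ[μ] h := (Lp.aestronglyMeasurable (D f)).ae_eq_mk
  set M : ℝ := ‖f‖ with hM_def
  have hgM : ∀ᵐ k ∂μ, |g k| ≤ M := by
    filter_upwards [LinfAeLeNorm f, hg_ae] with k h1 h2
    rw [← h2]; simpa [Real.norm_eq_abs] using h1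
  -- the set where |D f| is large
  set B : Set K := {k | η < |h k|} with hB_def
  have hB : μ B ≠ 0 := by
    intro h0
    have hae : ∀ᵐ k ∂μ, ‖(D f) k‖ ≤ η := by
      have : ∀ᵐ k ∂μ, ¬ (η < |h k|) := by
        rw [ae_iff]; simpa using h0
      filter_upwards [this, hh_ae] with k h1 h2
      rw [Real.norm_eq_abs, h2]; linarith [not_lt.mp h1]
    have := LinfNormLe (D f) hη.le hae
    linarith
  -- essential value of g on B
  have hlam : ∃ lam : ℝ, ∀ ε > (0:ℝ), μ (B ∩ {k | |g k - lam| < ε}) ≠ 0 := by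
    by_contra hno
    push_neg at hno
    choose eps heps hnull using hno
    have hcov : Set.Icc (-M) M ⊆ ⋃ lam : ℝ, Metric.ball lam (eps lam) := by
      intro x _
      exact Set.mem_iUnion.mpr ⟨x, Metric.mem_ball_self (heps x)⟩
    obtain ⟨T, hT⟩ := isCompact_Icc.elim_finite_subcover
      (fun lam : ℝ => Metric.ball lam (eps lam)) (fun _ => Metric.isOpen_ball) hcov
    have hsub : B ⊆ {k | ¬ |g k| ≤ M} ∪ ⋃ lam ∈ T, (B ∩ {k | |g k - lam| < eps lam}) := by
      intro k hk
      by_cases hgk : |g k| ≤ M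
      · have : g k ∈ Set.Icc (-M) M := abs_le.mp hgk
        obtain ⟨lam, hlamT, hball⟩ := Set.mem_iUnion₂.mp (hT this)
        refine Or.inr (Set.mem_iUnion₂.mpr ⟨lam, hlamT, hk, ?_⟩)
        simpa [Real.dist_eq] using hball
      · exact Or.inl hgk
    have h1 : μ {k | ¬ |g k| ≤ M} = 0 := by rw [← ae_iff] at *; exact hgM
    have h2 : μ (⋃ lam ∈ T, (B ∩ {k | |g k - lam| < eps lam})) = 0 := by
      refine (measure_biUnion_null_iff T.countable_toSet).mpr ?_
      intro lam _; exact hnull lam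
    exact hB (measure_mono_null hsub (le_antisymm (by
      calc μ _ ≤ _ := measure_union_le _ _
        _ = 0 := by rw [h1, h2, add_zero]) (zero_le)))
  obtain ⟨lam, hlam⟩ := hlam
  -- the sets P and functions
  set P : Set K := {k | |g k - lam| < 1} with hP_def
  have hPmeas : MeasurableSet P :=
    measurableSet_lt ((hg_meas.sub measurable_const).abs) measurable_const
  set pfun : K → ℝ := P.indicator (fun _ => (1:ℝ)) with hpfun_def
  have hpfun_meas : Measurable pfun := measurable_const.indicator hPmeas
  have hpfun_bd : ∀ k, ‖pfun k‖ ≤ 1 := by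
    intro k; rw [hpfun_def, Real.norm_eq_abs]
    by_cases hk : k ∈ P
    · rw [Set.indicator_of_mem hk]; norm_num
    · rw [Set.indicator_of_notMem hk]; norm_num
  set p : Lp ℝ ⊤ μ := mkLinf pfun hpfun_meas 1 hpfun_bd with hp_def
  have hp_coe : ⇑p =ᵐ[μ] pfun := mkLinf_coe _ _ _ _
  have hpp : ∀ k, pfun k * pfun k = pfun k := by
    intro k
    by_cases hk : k ∈ P
    · rw [hpfun_def, Set.indicator_of_mem hk]; norm_num
    · rw [hpfun_def, Set.indicator_of_notMem hk]; norm_num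
  -- square root functions
  set sfun : K → ℝ := fun k => Real.sqrt (max (g k - lam) 0) * pfun k with hsfun_def
  have hsfun_meas : Measurable sfun :=
    ((Real.continuous_sqrt.measurable.comp ((hg_meas.sub measurable_const).max measurable_const)).mul hpfun_meas)
  have hsfun_bd : ∀ k, ‖sfun k‖ ≤ 1 := by
    intro k; rw [hsfun_def, Real.norm_eq_abs, abs_mul]
    by_cases hk : k ∈ P
    · have h1 : |g k - lam| < 1 := hk
      have h2 : max (g k - lam) 0 ≤ 1 := max_le (by obtain ⟨hl, hr⟩ := abs_lt.mp h1; linarith) one_pos.le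
      have h3 : Real.sqrt (max (g k - lam) 0) ≤ 1 := by
        calc Real.sqrt (max (g k - lam) 0) ≤ Real.sqrt 1 := Real.sqrt_le_sqrt h2
          _ = 1 := Real.sqrt_one
      have h4 : |pfun k| ≤ 1 := by simpa [Real.norm_eq_abs] using hpfun_bd k
      calc |Real.sqrt (max (g k - lam) 0)| * |pfun k| ≤ 1 * 1 := by
            refine mul_le_mul ?_ h4 (abs_nonneg _) one_pos.le
            rwa [abs_of_nonneg (Real.sqrt_nonneg _)]
        _ = 1 := by norm_num
    · rw [hpfun_def, Set.indicator_of_notMem hk]; norm_num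
  set tfun : K → ℝ := fun k => Real.sqrt (max (lam - g k) 0) * pfun k with htfun_def
  have htfun_meas : Measurable tfun :=
    ((Real.continuous_sqrt.measurable.comp ((measurable_const.sub hg_meas).max measurable_const)).mul hpfun_meas)
  have htfun_bd : ∀ k, ‖tfun k‖ ≤ 1 := by
    intro k; rw [htfun_def, Real.norm_eq_abs, abs_mul]
    by_cases hk : k ∈ P
    · have h1 : |g k - lam| < 1 := hk
      have h2 : max (lam - g k) 0 ≤ 1 := max_le (by obtain ⟨hl, hr⟩ := abs_lt.mp h1; linarith) one_pos.le
      have h3 : Real.sqrt (max (lam - g k) 0) ≤ 1 := by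
        calc Real.sqrt (max (lam - g k) 0) ≤ Real.sqrt 1 := Real.sqrt_le_sqrt h2
          _ = 1 := Real.sqrt_one
      have h4 : |pfun k| ≤ 1 := by simpa [Real.norm_eq_abs] using hpfun_bd k
      calc |Real.sqrt (max (lam - g k) 0)| * |pfun k| ≤ 1 * 1 := by
            refine mul_le_mul ?_ h4 (abs_nonneg _) one_pos.le
            rwa [abs_of_nonneg (Real.sqrt_nonneg _)]
        _ = 1 := by norm_num
    · rw [hpfun_def, Set.indicator_of_notMem hk]; norm_num
  set s : Lp ℝ ⊤ μ := mkLinf sfun hsfun_meas 1 hsfun_bd with hs_def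
  have hs_coe : ⇑s =ᵐ[μ] sfun := mkLinf_coe _ _ _ _
  set t : Lp ℝ ⊤ μ := mkLinf tfun htfun_meas 1 htfun_bd with ht_def
  have ht_coe : ⇑t =ᵐ[μ] tfun := mkLinf_coe _ _ _ _
  -- identity I1 : p is idempotent
  have hI1 : mul p p = p := by
    refine Lp.ext ?_
    filter_upwards [hmul p p, hp_coe] with k h1 h2
    rw [h1, h2, hpp k, ← h2]
  have hDp : D p = 0 := derivIdem mul hmul D hlin hleib p hI1
  -- identity I2
  have hI2 : mul p f = lam • p + (mul s s - mul t t) := by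
    refine Lp.ext ?_
    filter_upwards [hmul p f, hp_coe, hg_ae, hmul s s, hs_coe, hmul t t, ht_coe,
      Lp.coeFn_add (lam • p) (mul s s - mul t t), Lp.coeFn_smul lam p,
      Lp.coeFn_sub (mul s s) (mul t t)] with k h1 h2 h3 h4 h5 h6 h7 h8 h9 h10
    rw [h1, h2, h3, h8]
    simp only [Pi.add_apply, Pi.smul_apply, smul_eq_mul]
    rw [h9, h10]
    simp only [Pi.smul_apply, Pi.sub_apply, smul_eq_mul]
    rw [h4, h6, h5, h7, h2]
    have hs2 : sfun k * sfun k = max (g k - lam) 0 * pfun k := by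
      rw [hsfun_def, mul_mul_mul_comm, Real.mul_self_sqrt (le_max_right _ _), hpp k]
    have ht2 : tfun k * tfun k = max (lam - g k) 0 * pfun k := by
      rw [htfun_def, mul_mul_mul_comm, Real.mul_self_sqrt (le_max_right _ _), hpp k]
    rw [hs2, ht2]
    rcases le_total (g k) lam with hc | hc
    · rw [max_eq_right (by linarith), max_eq_left (by linarith)]; ring
    · rw [max_eq_left (by linarith), max_eq_right (by linarith)]; ring
  -- D computation
  have hDpf : D (mul p f) = mul p (D f) := by
    rw [hleib p f, hDp, mulZeroRight mul hmul, add_zero]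
  have hexp : D (mul p f) = (mul s (D s) + mul s (D s)) - (mul t (D t) + mul t (D t)) := by
    rw [hI2]
    have e1 : lam • p + (mul s s - mul t t) = lam • p + ((-1 : ℝ) • (mul t t) + mul s s) := by
      rw [neg_one_smul]; abel
    rw [e1, hlin p _ lam, hlin (mul t t) (mul s s) (-1), hleib s s, hleib t t, hDp]
    rw [neg_one_smul, smul_zero]
    abel
  have hkey : mul p (D f) = (mul s (D s) + mul s (D s)) - (mul t (D t) + mul t (D t)) :=
    hDpf.symm.trans hexp
  -- choice of epsilon
  set S0 : ℝ := ‖D s‖ with hS0_def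
  set T0 : ℝ := ‖D t‖ with hT0_def
  set Cb : ℝ := S0 + T0 + 1 with hCb_def
  have hCb : 0 < Cb := by positivity
  set ε : ℝ := min 1 ((η / (2 * Cb)) ^ 2) with hε_def
  have hε : 0 < ε := lt_min one_pos (by positivity)
  have hε1 : ε ≤ 1 := min_le_left _ _
  have hsqrt : Real.sqrt ε ≤ η / (2 * Cb) := by
    calc Real.sqrt ε ≤ Real.sqrt ((η / (2 * Cb)) ^ 2) := Real.sqrt_le_sqrt (min_le_right _ _)
      _ = η / (2 * Cb) := Real.sqrt_sq (by positivity)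
  have hsqrt' : Real.sqrt ε * (2 * Cb) ≤ η := (le_div_iff₀ (by positivity)).mp hsqrt
  have hsp : 0 < Real.sqrt ε := Real.sqrt_pos.mpr hε
  -- the set Q
  set Q : Set K := {k | |g k - lam| < ε} with hQ_def
  have hQmeas : MeasurableSet Q :=
    measurableSet_lt ((hg_meas.sub measurable_const).abs) measurable_const
  set qfun : K → ℝ := Q.indicator (fun _ => (1:ℝ)) with hqfun_def
  have hqfun_meas : Measurable qfun := measurable_const.indicator hQmeas
  have hqfun_bd : ∀ k, ‖qfun k‖ ≤ 1 := by
    intro k; rw [hqfun_def, Real.norm_eq_abs]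
    by_cases hk : k ∈ Q
    · rw [Set.indicator_of_mem hk]; norm_num
    · rw [Set.indicator_of_notMem hk]; norm_num
  set q : Lp ℝ ⊤ μ := mkLinf qfun hqfun_meas 1 hqfun_bd with hq_def
  have hq_coe : ⇑q =ᵐ[μ] qfun := mkLinf_coe _ _ _ _
  have hQsubP : Q ⊆ P := by
    intro k hk
    have : |g k - lam| < ε := hk
    exact lt_of_lt_of_le this hε1
  have hQP : mul q p = q := by
    refine Lp.ext ?_
    filter_upwards [hmul q p, hq_coe, hp_coe] with k h1 h2 h3
    rw [h1, h2, h3]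
    by_cases hk : k ∈ Q
    · rw [hqfun_def, Set.indicator_of_mem hk, hpfun_def, Set.indicator_of_mem (hQsubP hk)]
      norm_num
    · rw [hqfun_def, Set.indicator_of_notMem hk]
      norm_num
  have hqDf : mul q (D f) = mul q (mul p (D f)) := by
    rw [← mulAssoc mul hmul, hQP]
  -- norm bounds on mul q s and mul q t
  have hqs : ‖mul q s‖ ≤ Real.sqrt ε := by
    refine LinfNormLe _ (Real.sqrt_nonneg _) ?_
    filter_upwards [hmul q s, hq_coe, hs_coe] with k h1 h2 h3
    rw [h1, h2, h3, Real.norm_eq_abs]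
    by_cases hk : k ∈ Q
    · rw [hqfun_def, Set.indicator_of_mem hk, one_mul, hsfun_def, abs_mul]
      have h5 : |g k - lam| < ε := hk
      have h6 : max (g k - lam) 0 ≤ ε := max_le (by cases abs_lt.mp h5; linarith) hε.le
      have h7 : Real.sqrt (max (g k - lam) 0) ≤ Real.sqrt ε := Real.sqrt_le_sqrt h6
      have h8 : |pfun k| ≤ 1 := by simpa [Real.norm_eq_abs] using hpfun_bd k
      calc |Real.sqrt (max (g k - lam) 0)| * |pfun k| ≤ Real.sqrt ε * 1 := by
            refine mul_le_mul ?_ h8 (abs_nonneg _) (Real.sqrt_nonneg _)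
            rwa [abs_of_nonneg (Real.sqrt_nonneg _)]
        _ = Real.sqrt ε := by norm_num
    · rw [hqfun_def, Set.indicator_of_notMem hk, zero_mul, abs_zero]
      exact Real.sqrt_nonneg _
  have hqt : ‖mul q t‖ ≤ Real.sqrt ε := by
    refine LinfNormLe _ (Real.sqrt_nonneg _) ?_
    filter_upwards [hmul q t, hq_coe, ht_coe] with k h1 h2 h3
    rw [h1, h2, h3, Real.norm_eq_abs]
    by_cases hk : k ∈ Q
    · rw [hqfun_def, Set.indicator_of_mem hk, one_mul, htfun_def, abs_mul]
      have h5 : |g k - lam| < ε := hk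
      have h6 : max (lam - g k) 0 ≤ ε := max_le (by cases abs_lt.mp h5; linarith) hε.le
      have h7 : Real.sqrt (max (lam - g k) 0) ≤ Real.sqrt ε := Real.sqrt_le_sqrt h6
      have h8 : |pfun k| ≤ 1 := by simpa [Real.norm_eq_abs] using hpfun_bd k
      calc |Real.sqrt (max (lam - g k) 0)| * |pfun k| ≤ Real.sqrt ε * 1 := by
            refine mul_le_mul ?_ h8 (abs_nonneg _) (Real.sqrt_nonneg _)
            rwa [abs_of_nonneg (Real.sqrt_nonneg _)]
        _ = Real.sqrt ε := by norm_num
    · rw [hqfun_def, Set.indicator_of_notMem hk, zero_mul, abs_zero]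
      exact Real.sqrt_nonneg _
  -- upper bound
  have hup : ‖mul q (D f)‖ < η := by
    have hdist : mul q (D f) =
        (mul (mul q s) (D s) + mul (mul q s) (D s)) -
          (mul (mul q t) (D t) + mul (mul q t) (D t)) := by
      rw [hqDf, hkey, mulSubRight mul hmul, mulAddRight mul hmul, mulAddRight mul hmul,
        mulAssoc mul hmul, mulAssoc mul hmul]
    have hb1 : ‖mul (mul q s) (D s)‖ ≤ Real.sqrt ε * S0 := by
      calc ‖mul (mul q s) (D s)‖ ≤ ‖mul q s‖ * ‖D s‖ := normMulLe mul hmul _ _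
        _ ≤ Real.sqrt ε * S0 := by
            refine mul_le_mul_of_nonneg_right hqs (norm_nonneg _)
    have hb2 : ‖mul (mul q t) (D t)‖ ≤ Real.sqrt ε * T0 := by
      calc ‖mul (mul q t) (D t)‖ ≤ ‖mul q t‖ * ‖D t‖ := normMulLe mul hmul _ _
        _ ≤ Real.sqrt ε * T0 := by
            refine mul_le_mul_of_nonneg_right hqt (norm_nonneg _)
    have hbig : ‖mul q (D f)‖ ≤ 2 * Real.sqrt ε * S0 + 2 * Real.sqrt ε * T0 := by
      rw [hdist]
      calc ‖(mul (mul q s) (D s) + mul (mul q s) (D s)) -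
            (mul (mul q t) (D t) + mul (mul q t) (D t))‖
          ≤ ‖mul (mul q s) (D s) + mul (mul q s) (D s)‖ +
            ‖mul (mul q t) (D t) + mul (mul q t) (D t)‖ := norm_sub_le _ _
        _ ≤ (‖mul (mul q s) (D s)‖ + ‖mul (mul q s) (D s)‖) +
            (‖mul (mul q t) (D t)‖ + ‖mul (mul q t) (D t)‖) :=
              add_le_add (norm_add_le _ _) (norm_add_le _ _)
        _ ≤ (Real.sqrt ε * S0 + Real.sqrt ε * S0) + (Real.sqrt ε * T0 + Real.sqrt ε * T0) :=
              add_le_add (add_le_add hb1 hb1) (add_le_add hb2 hb2)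
        _ = 2 * Real.sqrt ε * S0 + 2 * Real.sqrt ε * T0 := by ring
    have hexp2 : Real.sqrt ε * (2 * Cb) = 2 * Real.sqrt ε * S0 + 2 * Real.sqrt ε * T0
        + 2 * Real.sqrt ε := by rw [hCb_def]; ring
    linarith
  -- lower bound
  have hQB : μ (B ∩ Q) ≠ 0 := hlam ε hε
  have hlow : η ≤ ‖mul q (D f)‖ := by
    by_contra hlt
    push_neg at hlt
    have hae : ∀ᵐ k ∂μ, |qfun k * h k| < η := by
      filter_upwards [LinfAeLeNorm (mul q (D f)), hmul q (D f), hq_coe, hh_ae]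
        with k h1 h2 h3 h4
      have h5 : ‖(mul q (D f)) k‖ < η := lt_of_le_of_lt h1 hlt
      rw [h2, h3, h4] at h5
      rwa [Real.norm_eq_abs] at h5
    have h0 : μ {k | ¬ (|qfun k * h k| < η)} = 0 := ae_iff.mp hae
    refine hQB (measure_mono_null ?_ h0)
    rintro k ⟨hkB, hkQ⟩
    simp only [Set.mem_setOf_eq, not_lt]
    rw [hqfun_def, Set.indicator_of_mem hkQ, one_mul]
    exact le_of_lt hkB
  linarith

end Derivation
end MulAlg

end CH2

section CH3



universe u


/-- key fderiv step for parametric integrals -/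
lemma topAddOne : ((⊤:ℕ∞) : WithTop ℕ∞) + 1 ≤ ((⊤:ℕ∞) : WithTop ℕ∞) := by simp

lemma paramHasFDerivAt {E : Type u} [NormedAddCommGroup E] [NormedSpace ℝ E] [CompleteSpace E]
    (F : ℝ × (Fin n → ℝ) → E) (U : Set (ℝ × (Fin n → ℝ))) (hU : IsOpen U)
    (hF : ContDiffOn ℝ (⊤ : ℕ∞) F U) (x₁ : Fin n → ℝ)
    (hx₁ : ∀ t ∈ Set.Icc (0:ℝ) 1, (t, x₁) ∈ U) :
    HasFDerivAt (fun x => ∫ t in (0:ℝ)..1, F (t, x))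
      (∫ t in (0:ℝ)..1, (fderiv ℝ F (t, x₁)).comp
        (ContinuousLinearMap.inr ℝ ℝ (Fin n → ℝ))) x₁ := by
  classical
  set G : ℝ × (Fin n → ℝ) → (Fin n → ℝ) →L[ℝ] E :=
    fun p => (fderiv ℝ F p).comp (ContinuousLinearMap.inr ℝ ℝ (Fin n → ℝ)) with hG_def
  have hFd : ContDiffOn ℝ (⊤ : ℕ∞) (fderiv ℝ F) U :=
    hF.fderiv_of_isOpen hU topAddOne
  have hGsm : ContDiffOn ℝ (⊤ : ℕ∞) G U :=
    ContDiffOn.clm_comp hFd contDiffOn_const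
  have hGcont : ContinuousOn G U := hGsm.continuousOn
  have hFcont : ContinuousOn F U := hF.continuousOn
  -- compact tube inside U
  have hcomp : IsCompact ((Set.Icc (0:ℝ) 1) ×ˢ ({x₁} : Set (Fin n → ℝ))) :=
    isCompact_Icc.prod isCompact_singleton
  have hsubU : (Set.Icc (0:ℝ) 1) ×ˢ ({x₁} : Set (Fin n → ℝ)) ⊆ U := by
    rintro ⟨t, x⟩ ⟨ht, hx⟩
    rcases hx with rfl
    exact hx₁ t ht
  obtain ⟨δ, hδpos, hδsub⟩ := hcomp.exists_cthickening_subset_open hU hsubU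
  set C : Set (ℝ × (Fin n → ℝ)) := (Set.Icc (0:ℝ) 1) ×ˢ closedBall x₁ δ with hC_def
  have hCU : C ⊆ U := by
    rintro ⟨t, x⟩ ⟨ht, hx⟩
    refine hδsub (Metric.mem_cthickening_of_dist_le (t, x) (t, x₁) δ _ (by exact ⟨ht, rfl⟩) ?_)
    have hd : dist (t, x) (t, x₁) = max (dist t t) (dist x x₁) := Prod.dist_eq
    rw [hd, dist_self]
    exact max_le hδpos.le (Metric.mem_closedBall.mp hx)
  have hCcomp : IsCompact C := isCompact_Icc.prod (isCompact_closedBall _ _)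
  obtain ⟨Cb, hCb⟩ := hCcomp.exists_bound_of_continuousOn (hGcont.mono hCU)
  have huIoc : Set.uIoc (0:ℝ) 1 = Set.Ioc (0:ℝ) 1 := Set.uIoc_of_le zero_le_one
  have hIoc_sub : Set.Ioc (0:ℝ) 1 ⊆ Set.Icc (0:ℝ) 1 := Set.Ioc_subset_Icc_self
  -- measurability of slices
  have hmeas : ∀ x ∈ closedBall x₁ δ,
      AEStronglyMeasurable (fun t => F (t, x)) (volume.restrict (Set.uIoc (0:ℝ) 1)) := by
    intro x hx
    rw [huIoc]
    haveI : SecondCountableTopologyEither ℝ E := ⟨Or.inl inferInstance⟩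
    refine ContinuousOn.aestronglyMeasurable ?_ measurableSet_Ioc
    refine ContinuousOn.comp (t := U) hFcont
      ((continuous_id.prodMk continuous_const).continuousOn) ?_
    intro u hu
    exact hCU ⟨hIoc_sub hu, hx⟩
  have hmeas' : AEStronglyMeasurable (fun t => G (t, x₁)) (volume.restrict (Set.uIoc (0:ℝ) 1)) := by
    rw [huIoc]
    haveI : SecondCountableTopologyEither ℝ ((Fin n → ℝ) →L[ℝ] E) := ⟨Or.inl inferInstance⟩
    refine ContinuousOn.aestronglyMeasurable ?_ measurableSet_Ioc
    refine ContinuousOn.comp (t := U) hGcont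
      ((continuous_id.prodMk continuous_const).continuousOn) ?_
    intro u hu
    exact hCU ⟨hIoc_sub hu, mem_closedBall_self hδpos.le⟩
  have hint : IntervalIntegrable (fun t => F (t, x₁)) volume 0 1 := by
    refine ContinuousOn.intervalIntegrable ?_
    rw [Set.uIcc_of_le zero_le_one]
    refine ContinuousOn.comp (t := U) hFcont
      ((continuous_id.prodMk continuous_const).continuousOn) ?_
    intro u hu
    exact hCU ⟨hu, mem_closedBall_self hδpos.le⟩
  have key := intervalIntegral.hasFDerivAt_integral_of_dominated_of_fderiv_le
    (F := fun x t => F (t, x)) (F' := fun x t => G (t, x)) (x₀ := x₁)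
    (bound := fun _ => Cb) (a := (0:ℝ)) (b := 1) (μ := volume) (Metric.ball_mem_nhds x₁ hδpos)
    ?_ hint hmeas' ?_ ?_ ?_
  · exact key
  · filter_upwards [Metric.closedBall_mem_nhds x₁ hδpos] with x hx using hmeas x hx
  · refine Filter.Eventually.of_forall (fun t => ?_)
    intro ht x hx
    exact hCb (t, x) ⟨hIoc_sub (huIoc ▸ ht), ball_subset_closedBall hx⟩
  · exact intervalIntegrable_const
  · refine Filter.Eventually.of_forall (fun t => ?_)
    intro ht x hx
    have hdiff : DifferentiableAt ℝ F (t, x) := by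
      have hmem : (t, x) ∈ U := hCU ⟨hIoc_sub (huIoc ▸ ht), ball_subset_closedBall hx⟩
      exact (hF.contDiffAt (hU.mem_nhds hmem)).differentiableAt (by norm_num)
    have hcomp2 : HasFDerivAt (fun y => F (t, y)) (G (t, x)) x := by
      have h1 : HasFDerivAt F (fderiv ℝ F (t, x)) (t, x) := hdiff.hasFDerivAt
      have h2 : HasFDerivAt (fun y : Fin n → ℝ => (t, y))
          (ContinuousLinearMap.inr ℝ ℝ (Fin n → ℝ)) x := hasFDerivAt_prodMk_right t x
      exact h1.comp x h2
    exact hcomp2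

/-- smoothness of parametric integrals over [0,1] -/
lemma paramContDiffOn (m : ℕ) :
    ∀ {E : Type u} [NormedAddCommGroup E] [NormedSpace ℝ E] [CompleteSpace E]
    (F : ℝ × (Fin n → ℝ) → E) (U : Set (ℝ × (Fin n → ℝ))), IsOpen U →
    ContDiffOn ℝ (⊤ : ℕ∞) F U → ∀ (S : Set (Fin n → ℝ)), IsOpen S →
    (∀ x ∈ S, ∀ t ∈ Set.Icc (0:ℝ) 1, (t, x) ∈ U) →
    ContDiffOn ℝ m (fun x => ∫ t in (0:ℝ)..1, F (t, x)) S := by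
  induction m with
  | zero =>
    intro E _ _ _ F U hU hF S hS hSU
    rw [show ((0:ℕ) : WithTop ℕ∞) = 0 from by norm_cast, contDiffOn_zero]
    intro x hx
    have h := paramHasFDerivAt F U hU hF x (hSU x hx)
    exact (h.differentiableAt.continuousAt).continuousWithinAt
  | succ m ih =>
    intro E _ _ _ F U hU hF S hS hSU
    set G : ℝ × (Fin n → ℝ) → (Fin n → ℝ) →L[ℝ] E :=
      fun p => (fderiv ℝ F p).comp (ContinuousLinearMap.inr ℝ ℝ (Fin n → ℝ)) with hG_def
    have hFd : ContDiffOn ℝ (⊤ : ℕ∞) (fderiv ℝ F) U := hF.fderiv_of_isOpen hU topAddOne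
    have hGsm : ContDiffOn ℝ (⊤ : ℕ∞) G U := ContDiffOn.clm_comp hFd contDiffOn_const
    have hIH := ih G U hU hGsm S hS hSU
    have hdiff : ∀ x ∈ S, HasFDerivAt (fun x => ∫ t in (0:ℝ)..1, F (t, x))
        (∫ t in (0:ℝ)..1, G (t, x)) x := fun x hx => paramHasFDerivAt F U hU hF x (hSU x hx)
    rw [show ((m + 1 : ℕ) : WithTop ℕ∞) = (m : WithTop ℕ∞) + 1 by push_cast; ring]
    rw [contDiffOn_succ_iff_fderiv_of_isOpen hS]
    refine ⟨fun x hx => (hdiff x hx).differentiableAt.differentiableWithinAt, ?_, ?_⟩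
    · intro h; exact absurd h (by simp)
    · refine hIH.congr (fun x hx => ?_)
      exact (hdiff x hx).fderiv.symm ▸ rfl

end CH3

-- ============ toolkit ============
section Toolkit
variable {μ : Measure K} {V : Set (Fin n → ℝ)}

lemma extZero_apply (a : V → Lp ℝ ⊤ μ) {x : Fin n → ℝ} (hx : x ∈ V) :
    extZero V a x = a ⟨x, hx⟩ := by
  simp only [extZero]
  exact dif_pos hx

lemma extZero_coe (a : V → Lp ℝ ⊤ μ) (x : V) : extZero V a (x : Fin n → ℝ) = a x := by
  rw [extZero_apply a x.2]

lemma extZero_eqOn {a : V → Lp ℝ ⊤ μ} {f : (Fin n → ℝ) → Lp ℝ ⊤ μ}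
    (h : ∀ x : V, a x = f (x : Fin n → ℝ)) : Set.EqOn (extZero V a) f V := by
  intro x hx
  rw [extZero_apply a hx, h ⟨x, hx⟩]

lemma memA_of_contDiffOn {a : V → Lp ℝ ⊤ μ} {f : (Fin n → ℝ) → Lp ℝ ⊤ μ}
    (hf : ContDiffOn ℝ (⊤ : ℕ∞) f V) (h : ∀ x : V, a x = f (x : Fin n → ℝ)) : MemA V a :=
  hf.congr fun x hx => (extZero_eqOn h hx)

lemma memA_const (u : Lp ℝ ⊤ μ) : MemA V (fun _ => u) :=
  memA_of_contDiffOn contDiffOn_const (fun _ => rfl)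

lemma extZero_smul_add (c : ℝ) (a b : V → Lp ℝ ⊤ μ) :
    extZero V (c • a + b) = fun x => c • extZero V a x + extZero V b x := by
  funext x
  by_cases hx : x ∈ V
  · rw [extZero_apply _ hx, extZero_apply _ hx, extZero_apply _ hx]; rfl
  · simp only [extZero, dif_neg hx]; simp

lemma memA_smul_add {a b : V → Lp ℝ ⊤ μ} (c : ℝ) (ha : MemA V a) (hb : MemA V b) :
    MemA V (c • a + b) := by
  unfold MemA
  rw [extZero_smul_add]
  exact (ha.const_smul c).add hb

lemma memA_neg_add {a b : V → Lp ℝ ⊤ μ} (ha : MemA V a) (hb : MemA V b) :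
    MemA V ((-1 : ℝ) • a + b) := memA_smul_add _ ha hb

lemma memA_zero : MemA V (0 : V → Lp ℝ ⊤ μ) := by
  have : (0 : V → Lp ℝ ⊤ μ) = fun _ => (0 : Lp ℝ ⊤ μ) := rfl
  rw [this]; exact memA_const 0

-- coordinate functions
lemma coordCLM_contDiff [IsProbabilityMeasure μ] (i : Fin n) :
    ContDiff ℝ (⊤ : ℕ∞) (fun x : Fin n → ℝ => (x i) • Lp.const ⊤ μ (1:ℝ)) := by
  exact (ContinuousLinearMap.smulRight (ContinuousLinearMap.proj i : (Fin n → ℝ) →L[ℝ] ℝ)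
    (Lp.const ⊤ μ (1:ℝ))).contDiff

lemma memA_coordFn [IsProbabilityMeasure μ] (i : Fin n) : MemA V (coordFn μ V i) :=
  memA_of_contDiffOn ((coordCLM_contDiff i).contDiffOn) (fun _ => rfl)

-- partial derivatives
lemma partialD_eq_of_eventuallyEq (hV : IsOpen V) {a : V → Lp ℝ ⊤ μ}
    {f : (Fin n → ℝ) → Lp ℝ ⊤ μ} (h : ∀ x : V, a x = f (x : Fin n → ℝ)) (i : Fin n) (x : V) :
    partialD V i a x = fderiv ℝ f (x : Fin n → ℝ) (Pi.single i 1) := by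
  unfold partialD
  congr 1
  apply Filter.EventuallyEq.fderiv_eq
  exact Filter.eventuallyEq_of_mem (hV.mem_nhds x.2) (extZero_eqOn h)

lemma memA_partialD (hV : IsOpen V) {a : V → Lp ℝ ⊤ μ} (ha : MemA V a) (i : Fin n) :
    MemA V (partialD V i a) := by
  have hfd : ContDiffOn ℝ (⊤ : ℕ∞) (fderiv ℝ (extZero V a)) V :=
    ha.fderiv_of_isOpen hV (by simp)
  have : ContDiffOn ℝ (⊤ : ℕ∞)
      (fun x => fderiv ℝ (extZero V a) x (Pi.single i 1)) V :=
    hfd.clm_apply contDiffOn_const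
  exact memA_of_contDiffOn this (fun _ => rfl)

lemma differentiableAt_extZero (hV : IsOpen V) {a : V → Lp ℝ ⊤ μ} (ha : MemA V a) (x : V) :
    DifferentiableAt ℝ (extZero V a) (x : Fin n → ℝ) :=
  (ha.contDiffAt (hV.mem_nhds x.2)).differentiableAt (by norm_num)

lemma partialD_smul_add (hV : IsOpen V) {a b : V → Lp ℝ ⊤ μ} (ha : MemA V a) (hb : MemA V b)
    (c : ℝ) (i : Fin n) (x : V) :
    partialD V i (c • a + b) x = c • partialD V i a x + partialD V i b x := by
  unfold partialD
  rw [extZero_smul_add]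
  have hda := differentiableAt_extZero hV ha x
  have hdb := differentiableAt_extZero hV hb x
  rw [fderiv_fun_add (f := fun y => c • extZero V a y) ((hda.const_smul c)) hdb, fderiv_fun_const_smul hda]
  rfl

lemma partialD_const (hV : IsOpen V) (u : Lp ℝ ⊤ μ) (i : Fin n) (x : V) :
    partialD V i (fun _ => u) x = 0 := by
  rw [partialD_eq_of_eventuallyEq hV (a := fun _ => u) (f := fun _ => u) (fun _ => rfl) i x]
  rw [fderiv_const_apply]
  rfl

lemma partialD_coordFn [IsProbabilityMeasure μ] (hV : IsOpen V) (i j : Fin n) (x : V) :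
    partialD V j (coordFn μ V i) x = ((Pi.single i (1:ℝ) : Fin n → ℝ) j) • Lp.const ⊤ μ (1:ℝ) := by
  rw [partialD_eq_of_eventuallyEq hV (a := coordFn μ V i)
    (f := fun y : Fin n → ℝ => (y i) • Lp.const ⊤ μ (1:ℝ)) (fun _ => rfl) j x]
  have : fderiv ℝ (fun y : Fin n → ℝ => (y i) • Lp.const ⊤ μ (1:ℝ)) (x : Fin n → ℝ) =
      (ContinuousLinearMap.smulRight (ContinuousLinearMap.proj i : (Fin n → ℝ) →L[ℝ] ℝ)
        (Lp.const ⊤ μ (1:ℝ))) :=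
    ContinuousLinearMap.fderiv (ContinuousLinearMap.smulRight
      (ContinuousLinearMap.proj i : (Fin n → ℝ) →L[ℝ] ℝ) (Lp.const ⊤ μ (1:ℝ)))
  rw [this]
  simp [ContinuousLinearMap.smulRight_apply, Pi.single_apply, eq_comm]

end Toolkit


-- ============ multiplication as a continuous bilinear map ============
section MulSmooth
variable {μ : Measure K} [IsProbabilityMeasure μ] {V : Set (Fin n → ℝ)}
variable (mul : Lp ℝ ⊤ μ → Lp ℝ ⊤ μ → Lp ℝ ⊤ μ)
  (hmul : ∀ u v : Lp ℝ ⊤ μ, ⇑(mul u v) =ᵐ[μ] fun k => u k * v k)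

def mulCLM : Lp ℝ ⊤ μ →L[ℝ] Lp ℝ ⊤ μ →L[ℝ] Lp ℝ ⊤ μ :=
  LinearMap.mkContinuous₂
    (LinearMap.mk₂ ℝ mul
      (fun u v w => by
        rw [mulComm mul hmul _ w, mulAddRight mul hmul, mulComm mul hmul w, mulComm mul hmul w])
      (fun c u v => by
        rw [mulComm mul hmul _ v, mulSmulRight mul hmul, mulComm mul hmul v])
      (fun u v w => mulAddRight mul hmul u v w)
      (fun c u v => mulSmulRight mul hmul c u v))
    1 (fun u v => by simpa using normMulLe mul hmul u v)

lemma mulCLM_apply (u v : Lp ℝ ⊤ μ) : mulCLM mul hmul u v = mul u v := rfl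

include hmul in
lemma mulSumRight {ι : Type*} (u : Lp ℝ ⊤ μ) (s : Finset ι) (v : ι → Lp ℝ ⊤ μ) :
    mul u (∑ i ∈ s, v i) = ∑ i ∈ s, mul u (v i) := by
  have h := map_sum (mulCLM mul hmul u) v s
  simpa only [mulCLM_apply] using h

include hmul in
lemma mulZeroLeft (u : Lp ℝ ⊤ μ) : mul 0 u = 0 := by
  rw [mulComm mul hmul, mulZeroRight mul hmul]

include hmul in
lemma memA_mul {a b : V → Lp ℝ ⊤ μ} (ha : MemA V a) (hb : MemA V b) :
    MemA V (fun x => mul (a x) (b x)) := by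
  have hM : ContDiff ℝ (⊤ : ℕ∞) (fun p : Lp ℝ ⊤ μ × Lp ℝ ⊤ μ => mulCLM mul hmul p.1 p.2) :=
    (mulCLM mul hmul).isBoundedBilinearMap.contDiff
  have hsm : ContDiffOn ℝ (⊤ : ℕ∞)
      (fun x => mulCLM mul hmul (extZero V a x) (extZero V b x)) V :=
    hM.comp_contDiffOn (ha.prodMk hb)
  refine memA_of_contDiffOn hsm (fun x => ?_)
  rw [mulCLM_apply, extZero_coe, extZero_coe]

include hmul in
lemma partialD_mul (hV : IsOpen V) {a b : V → Lp ℝ ⊤ μ} (ha : MemA V a) (hb : MemA V b)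
    (i : Fin n) (x : V) :
    partialD V i (fun y => mul (a y) (b y)) x =
      mul (a x) (partialD V i b x) + mul (b x) (partialD V i a x) := by
  have hfd : HasFDerivAt (extZero V a) (fderiv ℝ (extZero V a) (x : Fin n → ℝ))
      (x : Fin n → ℝ) := (differentiableAt_extZero hV ha x).hasFDerivAt
  have hgd : HasFDerivAt (extZero V b) (fderiv ℝ (extZero V b) (x : Fin n → ℝ))
      (x : Fin n → ℝ) := (differentiableAt_extZero hV hb x).hasFDerivAt
  have hprod : HasFDerivAt (fun y => (extZero V a y, extZero V b y))
      ((fderiv ℝ (extZero V a) (x : Fin n → ℝ)).prod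
        (fderiv ℝ (extZero V b) (x : Fin n → ℝ))) (x : Fin n → ℝ) := hfd.prodMk hgd
  have hbil := (mulCLM mul hmul).isBoundedBilinearMap
  have hM : HasFDerivAt (fun y => mulCLM mul hmul (extZero V a y) (extZero V b y))
      ((hbil.deriv (extZero V a (x : Fin n → ℝ), extZero V b (x : Fin n → ℝ))).comp
        ((fderiv ℝ (extZero V a) (x : Fin n → ℝ)).prod
          (fderiv ℝ (extZero V b) (x : Fin n → ℝ)))) (x : Fin n → ℝ) :=
    by
      have h := HasFDerivAt.comp (x : Fin n → ℝ)
        (hbil.hasFDerivAt (extZero V a (x : Fin n → ℝ), extZero V b (x : Fin n → ℝ))) hprod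
      exact h
  have hee : extZero V (fun y => mul (a y) (b y)) =ᶠ[nhds (x : Fin n → ℝ)]
      (fun y => mulCLM mul hmul (extZero V a y) (extZero V b y)) := by
    refine Filter.eventuallyEq_of_mem (hV.mem_nhds x.2) ?_
    intro y hy
    show extZero V (fun y => mul (a y) (b y)) y = mulCLM mul hmul (extZero V a y) (extZero V b y)
    rw [extZero_apply _ hy, mulCLM_apply, extZero_apply _ hy, extZero_apply _ hy]
  unfold partialD
  rw [hee.fderiv_eq, hM.fderiv]
  rw [ContinuousLinearMap.comp_apply]
  rw [IsBoundedBilinearMap.deriv_apply]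
  simp only [ContinuousLinearMap.prod_apply, mulCLM_apply]
  rw [extZero_coe, extZero_coe]
  rw [mulComm mul hmul (fderiv ℝ (extZero V a) _ (Pi.single i 1)) (b x)]

end MulSmooth

-- ============ derivation helpers ============
section DerivHelpers
variable {μ : Measure K} [IsProbabilityMeasure μ] {V : Set (Fin n → ℝ)}
variable (mul : Lp ℝ ⊤ μ → Lp ℝ ⊤ μ → Lp ℝ ⊤ μ)
  (hmul : ∀ u v : Lp ℝ ⊤ μ, ⇑(mul u v) =ᵐ[μ] fun k => u k * v k)
  (ξ : (V → Lp ℝ ⊤ μ) → (V → Lp ℝ ⊤ μ)) (hξ : IsDerivationA V mul ξ)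

lemma memA_add {a b : V → Lp ℝ ⊤ μ} (ha : MemA V a) (hb : MemA V b) : MemA V (a + b) := by
  have h : a + b = (1:ℝ) • a + b := by rw [one_smul]
  rw [h]; exact memA_smul_add 1 ha hb

lemma memA_sum {ι : Type*} (s : Finset ι) (g : ι → (V → Lp ℝ ⊤ μ))
    (hg : ∀ i ∈ s, MemA V (g i)) : MemA V (∑ i ∈ s, g i) := by
  classical
  induction s using Finset.induction_on with
  | empty => simpa using (memA_zero (μ := μ) (V := V))
  | insert _ _ hx ih =>
    rw [Finset.sum_insert hx]
    exact memA_add (hg _ (Finset.mem_insert_self _ _))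
      (ih fun i hi => hg i (Finset.mem_insert_of_mem hi))

include hξ

lemma xi_zero : ξ 0 = 0 := by
  have h := hξ.2.1 0 0 memA_zero memA_zero 1
  simp only [one_smul, add_zero, smul_zero] at h
  have h' : ξ 0 + 0 = ξ 0 + ξ 0 := by rw [add_zero]; exact h
  exact (add_left_cancel h').symm

lemma xi_add {a b : V → Lp ℝ ⊤ μ} (ha : MemA V a) (hb : MemA V b) :
    ξ (a + b) = ξ a + ξ b := by
  have h := hξ.2.1 a b ha hb 1
  simpa using h

lemma xi_sum {ι : Type*} (s : Finset ι) (g : ι → (V → Lp ℝ ⊤ μ))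
    (hg : ∀ i ∈ s, MemA V (g i)) : ξ (∑ i ∈ s, g i) = ∑ i ∈ s, ξ (g i) := by
  classical
  induction s using Finset.induction_on with
  | empty => simpa using xi_zero mul ξ hξ
  | insert _ _ hx ih =>
    rw [Finset.sum_insert hx, Finset.sum_insert hx,
      xi_add mul ξ hξ (hg _ (Finset.mem_insert_self _ _))
        (memA_sum _ _ fun i hi => hg i (Finset.mem_insert_of_mem hi)),
      ih fun i hi => hg i (Finset.mem_insert_of_mem hi)]

include hmul

lemma xi_const_eval (x₀ : V) (u : Lp ℝ ⊤ μ) : ξ (fun _ => u) x₀ = 0 := by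
  set D : Lp ℝ ⊤ μ → Lp ℝ ⊤ μ := fun u => ξ (fun _ => u) x₀ with hD_def
  have hlinD : ∀ (u v : Lp ℝ ⊤ μ) (c : ℝ), D (c • u + v) = c • D u + D v := by
    intro u v c
    have h : (fun _ : V => c • u + v) = c • (fun _ : V => u) + (fun _ : V => v) := rfl
    show ξ (fun _ => c • u + v) x₀ = c • (ξ (fun _ => u) x₀) + ξ (fun _ => v) x₀
    rw [h, hξ.2.1 _ _ (memA_const u) (memA_const v) c]
    rfl
  have hleibD : ∀ u v : Lp ℝ ⊤ μ, D (mul u v) = mul u (D v) + mul v (D u) := by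
    intro u v
    have h : (fun _ : V => mul u v) =
        (fun x : V => mul ((fun _ : V => u) x) ((fun _ : V => v) x)) := rfl
    show ξ (fun _ => mul u v) x₀ = mul u (ξ (fun _ => v) x₀) + mul v (ξ (fun _ => u) x₀)
    rw [h, hξ.2.2 _ _ (memA_const u) (memA_const v)]
  exact derivationLinfZero mul hmul D hlinD hleibD u

lemma xi_local (hV : IsOpen V) (x₀ : V) (r : ℝ) (hr : 0 < r)
    {a b : V → Lp ℝ ⊤ μ} (ha : MemA V a) (hb : MemA V b)
    (hnear : ∀ x : V, dist (x : Fin n → ℝ) ((x₀ : V) : Fin n → ℝ) < r → a x = b x) :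
    ξ a x₀ = ξ b x₀ := by
  classical
  set c : V → Lp ℝ ⊤ μ := (-1 : ℝ) • b + a with hc_def
  have hc : MemA V c := memA_smul_add _ hb ha
  have hcx : ∀ x : V, dist (x : Fin n → ℝ) ((x₀ : V) : Fin n → ℝ) < r → c x = 0 := by
    intro x hx
    show (-1 : ℝ) • b x + a x = 0
    rw [hnear x hx]; simp
  set φ : ContDiffBump ((x₀ : V) : Fin n → ℝ) :=
    ⟨r/2, 3*r/4, by positivity, by linarith⟩ with hφ_def
  set ψ : V → Lp ℝ ⊤ μ := fun x => φ (x : Fin n → ℝ) • Lp.const ⊤ μ (1:ℝ) with hψ_def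
  have hψ : MemA V ψ :=
    memA_of_contDiffOn ((φ.contDiff.smul contDiff_const).contDiffOn) (fun _ => rfl)
  have hprod0 : (fun x : V => mul (ψ x) (c x)) = 0 := by
    funext x
    by_cases hx : dist (x : Fin n → ℝ) ((x₀ : V) : Fin n → ℝ) < r
    · rw [hcx x hx, mulZeroRight mul hmul]; rfl
    · have hφ0 : φ (x : Fin n → ℝ) = 0 := by
        apply φ.zero_of_le_dist
        show 3*r/4 ≤ dist (x : Fin n → ℝ) ((x₀ : V) : Fin n → ℝ)
        push_neg at hx
        linarith
      show mul (φ (x : Fin n → ℝ) • Lp.const ⊤ μ (1:ℝ)) (c x) = 0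
      rw [hφ0, zero_smul, mulZeroLeft mul hmul]
  have h := hξ.2.2 ψ c hψ hc
  rw [hprod0, xi_zero mul ξ hξ] at h
  have h0 := congrFun h.symm x₀
  have hψx₀ : ψ x₀ = Lp.const ⊤ μ (1:ℝ) := by
    show φ ((x₀ : V) : Fin n → ℝ) • Lp.const ⊤ μ (1:ℝ) = Lp.const ⊤ μ (1:ℝ)
    rw [φ.one_of_mem_closedBall (by simp [hφ_def]; positivity), one_smul]
  have hcx₀ : c x₀ = 0 := hcx x₀ (by simp [hr])
  rw [hψx₀, hcx₀, oneMul mul hmul, mulZeroLeft mul hmul, add_zero] at h0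
  -- h0 : ξ c x₀ = 0
  have hlin := hξ.2.1 b a hb ha (-1)
  have h2 := congrFun hlin x₀
  rw [← hc_def] at h2
  rw [h0] at h2
  have : (0 : Lp ℝ ⊤ μ) = (-1:ℝ) • ξ b x₀ + ξ a x₀ := h2
  have h3 := this.symm
  rw [neg_one_smul] at h3
  linear_combination (norm := abel) h3

end DerivHelpers

-- ============ Hadamard lemma ============
section Hadamard
variable {μ : Measure K} {V : Set (Fin n → ℝ)}

lemma hadamard (hV : IsOpen V) {a : V → Lp ℝ ⊤ μ} (ha : MemA V a) (x₀ : V) {ε : ℝ}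
    (hε : 0 < ε) (hball : Metric.ball ((x₀ : Fin n → ℝ)) ε ⊆ V) :
    ∃ hh : Fin n → ((Fin n → ℝ) → Lp ℝ ⊤ μ),
      (∀ i, ContDiffOn ℝ (⊤ : ℕ∞) (hh i) (Metric.ball ((x₀ : Fin n → ℝ)) ε)) ∧
      (∀ i, hh i ((x₀ : Fin n → ℝ)) = partialD V i a x₀) ∧
      (∀ x ∈ Metric.ball ((x₀ : Fin n → ℝ)) ε,
        extZero V a x = a x₀ + ∑ i, ((x i) - ((x₀ : Fin n → ℝ) i)) • hh i x) := by
  classical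
  set y₀ : Fin n → ℝ := (x₀ : Fin n → ℝ) with hy₀_def
  set g : (Fin n → ℝ) → Lp ℝ ⊤ μ := extZero V a with hg_def
  set γ : ℝ × (Fin n → ℝ) → (Fin n → ℝ) := fun p => y₀ + p.1 • (p.2 - y₀) with hγ_def
  have hγsm : ContDiff ℝ (⊤ : ℕ∞) γ :=
    contDiff_const.add (contDiff_fst.smul (contDiff_snd.sub contDiff_const))
  have hγmem : ∀ x ∈ Metric.ball y₀ ε, ∀ t ∈ Set.Icc (0:ℝ) 1, γ (t, x) ∈ Metric.ball y₀ ε := by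
    intro x hx t ht
    have hd : dist (γ (t, x)) y₀ = |t| * ‖x - y₀‖ := by
      rw [dist_eq_norm]
      show ‖y₀ + t • (x - y₀) - y₀‖ = |t| * ‖x - y₀‖
      rw [add_sub_cancel_left, norm_smul, Real.norm_eq_abs]
    rw [Metric.mem_ball, hd]
    have h1 : |t| ≤ 1 := by rw [abs_le]; constructor <;> [linarith [ht.1]; exact ht.2]
    have h2 : ‖x - y₀‖ < ε := by rw [← dist_eq_norm]; exact hx
    calc |t| * ‖x - y₀‖ ≤ 1 * ‖x - y₀‖ :=
          mul_le_mul_of_nonneg_right h1 (norm_nonneg _)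
      _ = ‖x - y₀‖ := one_mul _
      _ < ε := h2
  set hh : Fin n → ((Fin n → ℝ) → Lp ℝ ⊤ μ) :=
    fun i x => ∫ t in (0:ℝ)..1, fderiv ℝ g (γ (t, x)) (Pi.single i 1) with hh_def
  have hGi : ∀ i, ContDiffOn ℝ (⊤ : ℕ∞)
      (fun y => fderiv ℝ g y (Pi.single i (1:ℝ))) V :=
    fun i => (ha.fderiv_of_isOpen hV (by simp)).clm_apply contDiffOn_const
  have hfdc : ContinuousOn (fderiv ℝ g) V :=
    ha.continuousOn_fderiv_of_isOpen hV (by simp)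
  refine ⟨hh, ?_, ?_, ?_⟩
  · -- smoothness
    intro i
    set U : Set (ℝ × (Fin n → ℝ)) := γ ⁻¹' V with hU_def
    have hUopen : IsOpen U := hV.preimage hγsm.continuous
    have hFi : ContDiffOn ℝ (⊤ : ℕ∞) ((fun y => fderiv ℝ g y (Pi.single i (1:ℝ))) ∘ γ) U :=
      ContDiffOn.comp (hGi i) (hγsm.contDiffOn) (fun p hp => hp)
    have key : ∀ m : ℕ, ContDiffOn ℝ m (hh i) (Metric.ball y₀ ε) := by
      intro m
      exact paramContDiffOn m _ U hUopen hFi _ Metric.isOpen_ball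
        (fun x hx t ht => by
          show γ (t, x) ∈ V
          exact hball (hγmem x hx t ht))
    exact contDiffOn_infty.mpr key
  · -- value at x₀
    intro i
    have hγ0 : ∀ t : ℝ, γ (t, y₀) = y₀ := by
      intro t; show y₀ + t • (y₀ - y₀) = y₀; rw [sub_self, smul_zero, add_zero]
    show (∫ t in (0:ℝ)..1, fderiv ℝ g (γ (t, y₀)) (Pi.single i 1)) = partialD V i a x₀
    simp only [hγ0]
    rw [intervalIntegral.integral_const]
    show (1 - 0 : ℝ) • fderiv ℝ g y₀ (Pi.single i 1) = fderiv ℝ (extZero V a) y₀ (Pi.single i 1)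
    rw [sub_zero, one_smul]
  · -- the identity
    intro x hx
    have hcont1 : ContinuousOn (fun t : ℝ => fderiv ℝ g (γ (t, x))) (Set.Icc (0:ℝ) 1) := by
      refine ContinuousOn.comp (t := V) hfdc
        ((hγsm.continuous.comp (continuous_id.prodMk continuous_const)).continuousOn) ?_
      intro t ht
      exact hball (hγmem x hx t ht)
    have hcont : ∀ v : Fin n → ℝ,
        ContinuousOn (fun t : ℝ => fderiv ℝ g (γ (t, x)) v) (Set.Icc (0:ℝ) 1) := by
      intro v
      exact (ContinuousLinearMap.apply ℝ (Lp ℝ ⊤ μ) v).continuous.comp_continuousOn hcont1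
    have hint : ∀ v : Fin n → ℝ,
        IntervalIntegrable (fun t : ℝ => fderiv ℝ g (γ (t, x)) v) MeasureTheory.volume 0 1 := by
      intro v
      apply ContinuousOn.intervalIntegrable
      rw [Set.uIcc_of_le zero_le_one]
      exact hcont v
    -- FTC
    have hderiv : ∀ t ∈ Set.uIcc (0:ℝ) 1,
        HasDerivAt (fun t : ℝ => g (γ (t, x))) (fderiv ℝ g (γ (t, x)) (x - y₀)) t := by
      intro t ht
      rw [Set.uIcc_of_le zero_le_one] at ht
      have hline : HasDerivAt (fun t : ℝ => γ (t, x)) (x - y₀) t := by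
        have h1 : HasDerivAt (fun t : ℝ => t • (x - y₀)) ((1:ℝ) • (x - y₀)) t :=
          (hasDerivAt_id t).smul_const (x - y₀)
        rw [one_smul] at h1
        exact h1.const_add y₀
      have hgd : DifferentiableAt ℝ g (γ (t, x)) :=
        differentiableAt_extZero hV ha ⟨γ (t, x), hball (hγmem x hx t ht)⟩
      exact hgd.hasFDerivAt.comp_hasDerivAt t hline
    have hftc := intervalIntegral.integral_eq_sub_of_hasDerivAt hderiv (hint (x - y₀))
    have hγ1 : γ (1, x) = x := by show y₀ + (1:ℝ) • (x - y₀) = x; rw [one_smul]; abel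
    have hγ2 : γ (0, x) = y₀ := by show y₀ + (0:ℝ) • (x - y₀) = y₀; rw [zero_smul, add_zero]
    rw [hγ1, hγ2] at hftc
    -- decompose the direction
    have hvec : x - y₀ = ∑ i, (x i - y₀ i) • (Pi.single i (1:ℝ) : Fin n → ℝ) := by
      funext j
      simp only [Finset.sum_apply, Pi.smul_apply, Pi.single_apply, smul_eq_mul, mul_ite,
        mul_one, mul_zero]
      rw [Finset.sum_ite_eq Finset.univ j (fun i => x i - y₀ i)]
      simp
    have hexp : (fun t : ℝ => fderiv ℝ g (γ (t, x)) (x - y₀)) =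
        fun t => ∑ i, (x i - y₀ i) • (fderiv ℝ g (γ (t, x)) (Pi.single i 1)) := by
      funext t
      conv_lhs => rw [hvec]
      rw [map_sum]
      congr 1
      funext i
      rw [ContinuousLinearMap.map_smul]
    have hsum : (∫ t in (0:ℝ)..1, fderiv ℝ g (γ (t, x)) (x - y₀)) =
        ∑ i, (x i - y₀ i) • hh i x := by
      rw [hexp]
      rw [intervalIntegral.integral_finset_sum]
      · congr 1
        funext i
        rw [intervalIntegral.integral_smul]
      · intro i _
        exact (hint (Pi.single i 1)).smul (x i - y₀ i)
    have hgx₀ : g y₀ = a x₀ := extZero_coe a x₀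
    show g x = a x₀ + ∑ i, (x i - y₀ i) • hh i x
    rw [← hsum, hftc, ← hgx₀]
    abel

end Hadamard

-- ============ the formula ============
section Formula
variable {μ : Measure K} [IsProbabilityMeasure μ] {V : Set (Fin n → ℝ)}
variable (mul : Lp ℝ ⊤ μ → Lp ℝ ⊤ μ → Lp ℝ ⊤ μ)
  (hmul : ∀ u v : Lp ℝ ⊤ μ, ⇑(mul u v) =ᵐ[μ] fun k => u k * v k)

include hmul in
lemma xi_formula (hV : IsOpen V) (ξ : (V → Lp ℝ ⊤ μ) → (V → Lp ℝ ⊤ μ))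
    (hξ : IsDerivationA V mul ξ) {a : V → Lp ℝ ⊤ μ} (ha : MemA V a) (x₀ : V) :
    ξ a x₀ = ∑ i, mul (ξ (coordFn μ V i) x₀) (partialD V i a x₀) := by
  classical
  obtain ⟨ε, hε, hball⟩ := Metric.isOpen_iff.mp hV _ x₀.2
  obtain ⟨hh, hhsm, hhval, hhid⟩ := hadamard hV ha x₀ hε hball
  set y₀ : Fin n → ℝ := ((x₀ : V) : Fin n → ℝ) with hy₀_def
  set φ : ContDiffBump y₀ := ⟨ε/2, 3*ε/4, by positivity, by linarith⟩ with hφ_def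
  set hbump : Fin n → (V → Lp ℝ ⊤ μ) :=
    fun i x => φ ((x : V) : Fin n → ℝ) • hh i ((x : V) : Fin n → ℝ) with hbump_def
  have htsupp : tsupport ⇑φ = Metric.closedBall y₀ (3*ε/4) := φ.tsupport_eq
  have hbumpMemA : ∀ i, MemA V (hbump i) := by
    intro i
    have hF : ContDiffOn ℝ (⊤ : ℕ∞) (fun y => φ y • hh i y) V := by
      apply contDiffOn_of_locally_contDiffOn
      intro y hy
      by_cases hyb : y ∈ Metric.ball y₀ ε
      · exact ⟨Metric.ball y₀ ε, Metric.isOpen_ball, hyb,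
          (φ.contDiff.contDiffOn.smul (hhsm i)).mono Set.inter_subset_right⟩
      · refine ⟨(tsupport ⇑φ)ᶜ, (isClosed_tsupport _).isOpen_compl, ?_, ?_⟩
        · rw [htsupp]
          intro hmem
          apply hyb
          rw [Metric.mem_closedBall] at hmem
          rw [Metric.mem_ball]
          linarith
        · refine ContDiffOn.congr (contDiffOn_const (c := (0 : Lp ℝ ⊤ μ)))
            (fun z hz => ?_)
          have : φ z = 0 := image_eq_zero_of_notMem_tsupport hz.2
          rw [this, zero_smul]
    exact memA_of_contDiffOn hF (fun _ => rfl)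
  have hbumpval : ∀ i, hbump i x₀ = partialD V i a x₀ := by
    intro i
    show φ y₀ • hh i y₀ = partialD V i a x₀
    rw [φ.one_of_mem_closedBall (by simp [hφ_def]; positivity), one_smul, hhval i]
  set ci : Fin n → (V → Lp ℝ ⊤ μ) :=
    fun i x => (((x : V) : Fin n → ℝ) i - y₀ i) • Lp.const ⊤ μ (1:ℝ) with hci_def
  have hciMemA : ∀ i, MemA V (ci i) := by
    intro i
    have : ContDiff ℝ (⊤ : ℕ∞) (fun y : Fin n → ℝ => (y i - y₀ i) • Lp.const ⊤ μ (1:ℝ)) :=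
      (((ContinuousLinearMap.proj i : (Fin n → ℝ) →L[ℝ] ℝ).contDiff).sub
        contDiff_const).smul contDiff_const
    exact memA_of_contDiffOn this.contDiffOn (fun _ => rfl)
  set b : V → Lp ℝ ⊤ μ :=
    (fun _ : V => a x₀) + ∑ i, (fun x : V => mul (ci i x) (hbump i x)) with hb_def
  have hprodMemA : ∀ i, MemA V (fun x : V => mul (ci i x) (hbump i x)) :=
    fun i => memA_mul mul hmul (hciMemA i) (hbumpMemA i)
  have hbMemA : MemA V b :=
    memA_add (memA_const _) (memA_sum _ _ fun i _ => hprodMemA i)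
  -- near x₀ the two functions agree
  have hnear : ∀ x : V, dist ((x : V) : Fin n → ℝ) y₀ < ε/2 → a x = b x := by
    intro x hx
    have hxball : ((x : V) : Fin n → ℝ) ∈ Metric.ball y₀ ε := by
      rw [Metric.mem_ball]; linarith
    have h1 : a x = a x₀ + ∑ i, ((((x : V) : Fin n → ℝ) i) - y₀ i) • hh i ((x:V) : Fin n → ℝ) := by
      rw [← extZero_coe a x]
      exact hhid _ hxball
    have hφ1 : φ ((x : V) : Fin n → ℝ) = 1 :=
      φ.one_of_mem_closedBall (by rw [Metric.mem_closedBall]; exact hx.le)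
    rw [h1, hb_def]
    show _ = (fun _ : V => a x₀) x + (∑ i, (fun x : V => mul (ci i x) (hbump i x))) x
    rw [Finset.sum_apply]
    congr 1
    refine Finset.sum_congr rfl (fun i _ => ?_)
    show (((x:V) : Fin n → ℝ) i - y₀ i) • hh i ((x:V) : Fin n → ℝ) = mul (ci i x) (hbump i x)
    rw [hci_def]
    rw [smulOneMul mul hmul]
    show _ = (((x:V) : Fin n → ℝ) i - y₀ i) • (φ ((x:V) : Fin n → ℝ) • hh i ((x:V) : Fin n → ℝ))
    rw [hφ1, one_smul]
  have hloc : ξ a x₀ = ξ b x₀ :=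
    xi_local mul hmul ξ hξ hV x₀ (ε/2) (by positivity) ha hbMemA hnear
  -- compute ξ b x₀
  have hsplit : ξ b = ξ (fun _ : V => a x₀) + ξ (∑ i, fun x : V => mul (ci i x) (hbump i x)) :=
    xi_add mul ξ hξ (memA_const _) (memA_sum _ _ fun i _ => hprodMemA i)
  have hsum : ξ (∑ i, fun x : V => mul (ci i x) (hbump i x)) =
      ∑ i, ξ (fun x : V => mul (ci i x) (hbump i x)) :=
    xi_sum mul ξ hξ _ _ fun i _ => hprodMemA i
  have hterm : ∀ i, ξ (fun x : V => mul (ci i x) (hbump i x)) x₀ =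
      mul (ξ (coordFn μ V i) x₀) (partialD V i a x₀) := by
    intro i
    have hlb := hξ.2.2 (ci i) (hbump i) (hciMemA i) (hbumpMemA i)
    have h0 := congrFun hlb x₀
    have hci0 : ci i x₀ = 0 := by
      show (y₀ i - y₀ i) • Lp.const ⊤ μ (1:ℝ) = 0
      rw [sub_self, zero_smul]
    rw [hci0, mulZeroLeft mul hmul, zero_add, hbumpval i] at h0
    -- h0 : ξ (prod) x₀ = mul (partialD V i a x₀) (ξ (ci i) x₀)
    have hcidecomp : ci i = (1:ℝ) • coordFn μ V i +
        (fun _ : V => (-(y₀ i)) • Lp.const ⊤ μ (1:ℝ)) := by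
      funext x
      show (((x:V) : Fin n → ℝ) i - y₀ i) • Lp.const ⊤ μ (1:ℝ) =
        (1:ℝ) • ((((x:V) : Fin n → ℝ) i) • Lp.const ⊤ μ (1:ℝ)) +
          (-(y₀ i)) • Lp.const ⊤ μ (1:ℝ)
      module
    have hxici : ξ (ci i) x₀ = ξ (coordFn μ V i) x₀ := by
      rw [hcidecomp, hξ.2.1 _ _ (memA_coordFn i) (memA_const _) 1]
      show (1:ℝ) • ξ (coordFn μ V i) x₀ + ξ (fun _ : V => (-(y₀ i)) • Lp.const ⊤ μ (1:ℝ)) x₀ = _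
      rw [one_smul, xi_const_eval mul hmul ξ hξ x₀, add_zero]
    rw [hxici] at h0
    rw [h0, mulComm mul hmul]
  rw [hloc, hsplit]
  show ξ (fun _ : V => a x₀) x₀ + ξ (∑ i, fun x : V => mul (ci i x) (hbump i x)) x₀ = _
  rw [xi_const_eval mul hmul ξ hξ x₀, zero_add, hsum]
  rw [Finset.sum_apply]
  exact Finset.sum_congr rfl fun i _ => hterm i

end Formula


/-- Every derivation `ξ` of `A(V⊗K)` satisfies `ξ(a) = ∑ᵢ ξ(xᵢ) · ∂ᵢa`, and the map
`ξ ↦ (ξ(x₁), …, ξ(xₙ))` is an isomorphism of `A(V⊗K)`-modules from the module of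
derivations of `A(V⊗K)` onto `A(V⊗K)ⁿ` (it is injective and surjective onto the smooth
`n`-tuples); in particular the module of derivations is free of rank `n` over `A(V⊗K)`
with basis the partial derivatives `∂₁, …, ∂ₙ`. -/
theorem derivations_of_trivial_random_manifold_free
    (μ : Measure K) [IsProbabilityMeasure μ]
    (V : Set (Fin n → ℝ)) (hV : IsOpen V)
    (mul : Lp ℝ ⊤ μ → Lp ℝ ⊤ μ → Lp ℝ ⊤ μ)
    (hmul : ∀ u v : Lp ℝ ⊤ μ, ⇑(mul u v) =ᵐ[μ] fun k => u k * v k) :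
    -- the formula `ξ(a) = ∑ᵢ ξ(xᵢ) · ∂ᵢa`
    (∀ ξ, IsDerivationA V mul ξ → ∀ a, MemA V a →
      ξ a = fun x => ∑ i, mul (ξ (coordFn μ V i) x) (partialD V i a x)) ∧
    -- injectivity of `ξ ↦ (ξ(x₁), …, ξ(xₙ))` on derivations
    (∀ ξ ζ, IsDerivationA V mul ξ → IsDerivationA V mul ζ →
      (∀ i, ξ (coordFn μ V i) = ζ (coordFn μ V i)) →
      ∀ a, MemA V a → ξ a = ζ a) ∧
    -- surjectivity onto `A(V⊗K)ⁿ`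
    (∀ c : Fin n → (V → Lp ℝ ⊤ μ), (∀ i, MemA V (c i)) →
      ∃ ξ, IsDerivationA V mul ξ ∧ ∀ i, ξ (coordFn μ V i) = c i) ∧
    -- `A(V⊗K)`-linearity of `ξ ↦ (ξ(x₁), …, ξ(xₙ))`: the module of derivations is
    -- stable under multiplication by elements of `A(V⊗K)`
    (∀ ξ a, IsDerivationA V mul ξ → MemA V a →
      IsDerivationA V mul (fun b x => mul (a x) (ξ b x))) := by

  classical
  have mulOneRight : ∀ u : Lp ℝ ⊤ μ, mul u (Lp.const ⊤ μ (1:ℝ)) = u := by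
    intro u; rw [mulComm mul hmul, oneMul mul hmul]
  have formula : ∀ ξ, IsDerivationA V mul ξ → ∀ a, MemA V a →
      ξ a = fun x => ∑ i, mul (ξ (coordFn μ V i) x) (partialD V i a x) := by
    intro ξ hξ a ha
    funext x
    exact xi_formula mul hmul hV ξ hξ ha x
  refine ⟨formula, ?_, ?_, ?_⟩
  · -- injectivity
    intro ξ ζ hξ hζ hcoord a ha
    rw [formula ξ hξ a ha, formula ζ hζ a ha]
    funext x
    refine Finset.sum_congr rfl fun i _ => ?_
    rw [hcoord i]
  · -- surjectivity
    intro c hc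
    set ξc : (V → Lp ℝ ⊤ μ) → (V → Lp ℝ ⊤ μ) :=
      fun a => ∑ i, (fun x : V => mul (c i x) (partialD V i a x)) with hξc_def
    have hξc_apply : ∀ a x, ξc a x = ∑ i, mul (c i x) (partialD V i a x) := by
      intro a x; rw [hξc_def]; exact Finset.sum_apply _ _ _
    refine ⟨ξc, ⟨?_, ?_, ?_⟩, ?_⟩
    · -- preserves MemA
      intro a ha
      exact memA_sum _ _ fun i _ =>
        memA_mul mul hmul (hc i) (memA_partialD hV ha i)
    · -- linearity
      intro a b ha hb c₀
      funext x
      rw [hξc_apply]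
      show _ = c₀ • ξc a x + ξc b x
      rw [hξc_apply, hξc_apply, Finset.smul_sum, ← Finset.sum_add_distrib]
      refine Finset.sum_congr rfl fun i _ => ?_
      rw [partialD_smul_add hV ha hb c₀ i x, mulAddRight mul hmul,
        mulSmulRight mul hmul]
    · -- Leibniz
      intro a b ha hb
      funext x
      rw [hξc_apply]
      show _ = mul (a x) (ξc b x) + mul (b x) (ξc a x)
      rw [hξc_apply, hξc_apply, mulSumRight mul hmul, mulSumRight mul hmul,
        ← Finset.sum_add_distrib]
      refine Finset.sum_congr rfl fun i _ => ?_
      rw [partialD_mul mul hmul hV ha hb i x, mulAddRight mul hmul]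
      congr 1
      · rw [← mulAssoc mul hmul, ← mulAssoc mul hmul, mulComm mul hmul (c i x) (a x)]
      · rw [← mulAssoc mul hmul, ← mulAssoc mul hmul, mulComm mul hmul (c i x) (b x)]
    · -- coordinates
      intro i
      funext x
      rw [hξc_apply]
      have hterm : ∀ j, mul (c j x) (partialD V j (coordFn μ V i) x) =
          ((Pi.single i (1:ℝ) : Fin n → ℝ) j) • c j x := by
        intro j
        rw [partialD_coordFn hV i j x, mulSmulRight mul hmul, mulOneRight]
      simp only [hterm]
      rw [Finset.sum_eq_single i]
      · rw [Pi.single_eq_same, one_smul]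
      · intro j _ hj
        rw [Pi.single_eq_of_ne hj, zero_smul]
      · intro hi; exact absurd (Finset.mem_univ i) hi
  · -- module stability
    intro ξ a hξ ha
    refine ⟨?_, ?_, ?_⟩
    · intro b hb
      exact memA_mul mul hmul ha (hξ.1 b hb)
    · intro u v hu hv c₀
      funext x
      show mul (a x) (ξ (c₀ • u + v) x) = c₀ • mul (a x) (ξ u x) + mul (a x) (ξ v x)
      rw [hξ.2.1 u v hu hv c₀]
      show mul (a x) (c₀ • ξ u x + ξ v x) = _
      rw [mulAddRight mul hmul, mulSmulRight mul hmul]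
    · intro u v hu hv
      funext x
      show mul (a x) (ξ (fun y => mul (u y) (v y)) x) =
        mul (u x) (mul (a x) (ξ v x)) + mul (v x) (mul (a x) (ξ u x))
      rw [hξ.2.2 u v hu hv]
      show mul (a x) (mul (u x) (ξ v x) + mul (v x) (ξ u x)) = _
      rw [mulAddRight mul hmul]
      congr 1
      · rw [← mulAssoc mul hmul, ← mulAssoc mul hmul, mulComm mul hmul (a x) (u x)]
      · rw [← mulAssoc mul hmul, ← mulAssoc mul hmul, mulComm mul hmul (a x) (v x)]

end
end

section
/- Let X be a standard Borel space and let E be an equivalence relation on X whose graph {(x,y) : x E y} is a Borel subset of X × X and all of whose equivalence classes are finite. Then E admits a Borel fundamental domain: there exists a Borel set S ⊆ X that intersects every E-class in exactly one point, i.e. for every x ∈ X there is a unique y ∈ S with x E y. -/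
open Set Function PiNat MeasureTheory
set_option linter.unusedSectionVars false

namespace FBER

variable {α : Type*}

section Novikov
variable [TopologicalSpace α] [T2Space α] [MeasurableSpace α] [OpensMeasurableSpace α]

/-- A countable family of sets is (Borel) separable if there are measurable supersets
with empty intersection. -/
def SepFam (S : ℕ → Set α) : Prop :=
  ∃ B : ℕ → Set α, (∀ n, S n ⊆ B n) ∧ (∀ n, MeasurableSet (B n)) ∧ (⋂ n, B n) = ∅

lemma SepFam.of_iUnion {S : ℕ → Set α} {k : ℕ} {T : ℕ → Set α} (hS : S k ⊆ ⋃ i, T i)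
    (h : ∀ i : ℕ, SepFam (fun n => if n = k then T i else S n)) : SepFam S := by
  choose B hB hBm hBi using h
  refine ⟨fun n => if n = k then ⋃ i, B i k else ⋂ i, B i n, ?_, ?_, ?_⟩
  · intro n
    by_cases hn : n = k
    · subst hn
      simp only [if_pos rfl]
      refine hS.trans (iUnion_mono fun i => ?_)
      have := hB i n
      simpa using this
    · simp only [if_neg hn]
      refine subset_iInter fun i => ?_
      have := hB i n
      simpa [hn] using this
  · intro n
    by_cases hn : n = k
    · simp only [hn, if_pos rfl]
      exact MeasurableSet.iUnion fun i => hBm i k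
    · simp only [if_neg hn]
      exact MeasurableSet.iInter fun i => hBm i n
  · ext x
    simp only [mem_iInter, mem_empty_iff_false, iff_false]
    intro hx
    have hk := hx k
    simp only [if_pos rfl] at hk
    obtain ⟨i, hi⟩ := mem_iUnion.1 hk
    have : x ∈ ⋂ n, B i n := by
      refine mem_iInter.2 fun n => ?_
      by_cases hn : n = k
      · subst hn; exact hi
      · have := hx n
        simp only [if_neg hn] at this
        exact mem_iInter.1 this i
    rw [hBi i] at this
    exact this

/-- **Novikov separation theorem**: countably many analytic sets with empty intersection
can be enlarged to Borel sets with empty intersection. -/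
theorem sepFam_of_analyticSet {A : ℕ → Set α} (hA : ∀ n, AnalyticSet (A n))
    (h : (⋂ n, A n) = ∅) : SepFam A := by
  by_cases hne : ∀ n, (A n).Nonempty
  swap
  · push_neg at hne
    obtain ⟨n0, hn0⟩ := hne
    refine ⟨fun n => if n = n0 then ∅ else univ, fun n => ?_, fun n => ?_, ?_⟩
    · by_cases hn : n = n0 <;> simp [hn, hn0]
    · by_cases hn : n = n0 <;> simp [hn]
    · ext x; simp only [mem_iInter, mem_empty_iff_false, iff_false]
      intro hx; have := hx n0; simp at this
  -- all sets are nonempty ranges of continuous functions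
  have hA' : ∀ n, ∃ f : (ℕ → ℕ) → α, Continuous f ∧ range f = A n := by
    intro n
    have := hA n
    rw [AnalyticSet] at this
    rcases this with h' | h'
    · exact absurd h' (by simpa [h'] using (hne n).ne_empty)
    · exact h'
  choose f f_cont f_range using hA'
  suffices H : SepFam (fun n => range (f n)) by
    refine ⟨H.choose, fun n => ?_, H.choose_spec.2.1, H.choose_spec.2.2⟩
    rw [← f_range n]; exact H.choose_spec.1 n
  by_contra hsep
  -- one-step refinement
  have I : ∀ (c : ℕ → (ℕ → ℕ) × ℕ) (j : ℕ),
      ¬ SepFam (fun n => f n '' cylinder (c n).1 (c n).2) →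
      ∃ x', x' ∈ cylinder (c j).1 (c j).2 ∧
        ¬ SepFam (fun n => f n ''
          cylinder ((Function.update c j (x', (c j).2 + 1)) n).1
            ((Function.update c j (x', (c j).2 + 1)) n).2) := by
    intro c j
    contrapose!
    intro H
    apply SepFam.of_iUnion (k := j)
      (T := fun i => f j '' cylinder (Function.update (c j).1 (c j).2 i) ((c j).2 + 1))
    · rw [← iUnion_cylinder_update (c j).1 (c j).2, image_iUnion]
    · intro i
      have hx' : Function.update (c j).1 (c j).2 i ∈ cylinder (c j).1 (c j).2 :=
        update_mem_cylinder _ _ _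
      have := H _ hx'
      convert this using 2 with n
      by_cases hn : n = j
      · subst hn
        simp [Function.update_self]
      · simp [hn, Function.update_of_ne hn]
  -- iterate the refinement
  have step : ∀ (j : ℕ)
      (p : {c : ℕ → (ℕ → ℕ) × ℕ // ¬ SepFam (fun n => f n '' cylinder (c n).1 (c n).2)}),
      ∃ x', x' ∈ cylinder (p.1 j).1 (p.1 j).2 ∧
        ¬ SepFam (fun n => f n ''
          cylinder ((Function.update p.1 j (x', (p.1 j).2 + 1)) n).1
            ((Function.update p.1 j (x', (p.1 j).2 + 1)) n).2) :=
    fun j p => I p.1 j p.2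
  choose XX hX1 hX2 using step
  let F : ℕ → {c : ℕ → (ℕ → ℕ) × ℕ // ¬ SepFam (fun n => f n '' cylinder (c n).1 (c n).2)} →
      {c : ℕ → (ℕ → ℕ) × ℕ // ¬ SepFam (fun n => f n '' cylinder (c n).1 (c n).2)} :=
    fun j p => ⟨Function.update p.1 j (XX j p, (p.1 j).2 + 1), hX2 j p⟩
  have p0mem : ¬ SepFam (fun n => f n ''
      cylinder ((fun _ : ℕ => ((fun _ : ℕ => 0), 0)) n).1
        ((fun _ : ℕ => ((fun _ : ℕ => 0), 0)) n).2) := by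
    simpa [cylinder_zero, image_univ] using hsep
  let p0 : {c : ℕ → (ℕ → ℕ) × ℕ // ¬ SepFam (fun n => f n '' cylinder (c n).1 (c n).2)} :=
    ⟨fun _ => ((fun _ => 0), 0), p0mem⟩
  let p : ℕ → {c : ℕ → (ℕ → ℕ) × ℕ // ¬ SepFam (fun n => f n '' cylinder (c n).1 (c n).2)} :=
    fun t => Nat.rec p0 (fun t pt => F t.unpair.1 pt) t
  have punfold : ∀ t n, (p (t + 1)).1 n =
      Function.update (p t).1 t.unpair.1
        (XX t.unpair.1 (p t), ((p t).1 t.unpair.1).2 + 1) n := fun t n => rfl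
  let L : ℕ → ℕ → ℕ := fun t n => ((p t).1 n).2
  let b : ℕ → ℕ → (ℕ → ℕ) := fun t n => ((p t).1 n).1
  have hL : ∀ t n, L (t + 1) n = if n = t.unpair.1 then L t n + 1 else L t n := by
    intro t n
    show ((p (t + 1)).1 n).2 = _
    rw [punfold]
    by_cases hn : n = t.unpair.1
    · rw [if_pos hn, hn, Function.update_self]
    · rw [if_neg hn, Function.update_of_ne hn]
  have hbeq : ∀ t n, n ≠ t.unpair.1 → b (t + 1) n = b t n := by
    intro t n hn
    show ((p (t + 1)).1 n).1 = ((p t).1 n).1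
    rw [punfold, Function.update_of_ne hn]
  have hbcyl : ∀ t, b (t + 1) t.unpair.1 ∈ cylinder (b t t.unpair.1) (L t t.unpair.1) := by
    intro t
    have h1 : b (t + 1) t.unpair.1 = XX t.unpair.1 (p t) := by
      show ((p (t + 1)).1 t.unpair.1).1 = _
      rw [punfold, Function.update_self]
    rw [h1]
    exact hX1 t.unpair.1 (p t)
  have L_mono : ∀ n, Monotone fun t => L t n := by
    intro n
    apply monotone_nat_of_le_succ
    intro t
    rw [hL t n]
    split <;> omega
  have L_unb : ∀ n K, ∃ t, K ≤ L t n := by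
    intro n K
    induction K with
    | zero => exact ⟨0, Nat.zero_le _⟩
    | succ K ih =>
      obtain ⟨t, ht⟩ := ih
      refine ⟨Nat.pair n t + 1, ?_⟩
      have h1 : t ≤ Nat.pair n t := Nat.right_le_pair n t
      have h2 : L t n ≤ L (Nat.pair n t) n := L_mono n h1
      have h3 := hL (Nat.pair n t) n
      rw [Nat.unpair_pair, if_pos rfl] at h3
      omega
  have stab : ∀ n i t t', t ≤ t' → i < L t n → b t' n i = b t n i := by
    intro n i t t' htt' hi
    induction t', htt' using Nat.le_induction with
    | base => rfl
    | succ t' htt' ih =>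
      by_cases hn : n = t'.unpair.1
      · subst hn
        have hmem := hbcyl t'
        rw [mem_cylinder_iff] at hmem
        rw [hmem i (lt_of_lt_of_le hi (L_mono _ htt')), ih]
      · rw [hbeq t' n hn, ih]
  choose τ hτ using fun n i => L_unb n (i + 1)
  let y : ℕ → ℕ → ℕ := fun n i => b (τ n i) n i
  have cyl_eq : ∀ t n, cylinder (b t n) (L t n) = cylinder (y n) (L t n) := by
    intro t n
    ext z
    rw [mem_cylinder_iff, mem_cylinder_iff]
    have key : ∀ i, i < L t n → y n i = b t n i := by
      intro i hi
      have h1 : b (max t (τ n i)) n i = b t n i :=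
        stab n i t _ (le_max_left _ _) hi
      have h2 : b (max t (τ n i)) n i = b (τ n i) n i :=
        stab n i (τ n i) _ (le_max_right _ _) (hτ n i)
      show b (τ n i) n i = b t n i
      rw [← h2, h1]
    constructor
    · intro hz i hi
      rw [key i hi]
      exact hz i hi
    · intro hz i hi
      rw [← key i hi]
      exact hz i hi
  have M : ∀ t, ¬ SepFam (fun n => f n '' cylinder (y n) (L t n)) := by
    intro t
    have hfe : (fun n => f n '' cylinder (y n) (L t n))
        = fun n => f n '' cylinder (b t n) (L t n) := by
      funext n
      rw [cyl_eq]
    rw [hfe]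
    exact (p t).2
  -- endgame
  by_cases hall : ∀ n, f n (y n) = f 0 (y 0)
  · have : f 0 (y 0) ∈ ⋂ n, A n := by
      refine mem_iInter.2 fun n => ?_
      rw [← f_range n]
      exact ⟨y n, hall n⟩
    rw [h] at this
    exact this
  · push_neg at hall
    obtain ⟨n, hn⟩ := hall
    have hn0 : n ≠ 0 := by
      intro h'
      exact hn (by rw [h'])
    obtain ⟨u, v, u_open, v_open, xu, yv, huv⟩ := t2_separation hn
    letI : MetricSpace (ℕ → ℕ) := metricSpaceNatNat
    obtain ⟨εx, εxpos, hεx⟩ : ∃ εx : ℝ, εx > 0 ∧ Metric.ball (y n) εx ⊆ f n ⁻¹' u := by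
      apply Metric.mem_nhds_iff.1
      exact (f_cont n).continuousAt.preimage_mem_nhds (u_open.mem_nhds xu)
    obtain ⟨εy, εypos, hεy⟩ : ∃ εy : ℝ, εy > 0 ∧ Metric.ball (y 0) εy ⊆ f 0 ⁻¹' v := by
      apply Metric.mem_nhds_iff.1
      exact (f_cont 0).continuousAt.preimage_mem_nhds (v_open.mem_nhds yv)
    obtain ⟨k, hk⟩ : ∃ k : ℕ, (1 / 2 : ℝ) ^ k < min εx εy :=
      exists_pow_lt_of_lt_one (lt_min εxpos εypos) (by norm_num)
    obtain ⟨t1, ht1⟩ := L_unb n k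
    obtain ⟨t2, ht2⟩ := L_unb 0 k
    set t := max t1 t2 with htdef
    have hLn : k ≤ L t n := le_trans ht1 (L_mono n (le_max_left _ _))
    have hL0 : k ≤ L t 0 := le_trans ht2 (L_mono 0 (le_max_right _ _))
    apply M t
    refine ⟨fun j => if j = n then u else if j = 0 then v else univ, ?_, ?_, ?_⟩
    · intro j
      by_cases hjn : j = n
      · subst hjn
        simp only [if_pos rfl]
        rw [image_subset_iff]
        refine Subset.trans ?_ hεx
        intro z hz
        rw [mem_cylinder_iff_dist_le] at hz
        refine Metric.mem_ball.2 (lt_of_le_of_lt ?_ (hk.trans_le (min_le_left _ _)))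
        refine hz.trans ?_
        apply pow_le_pow_of_le_one (by norm_num) (by norm_num) hLn
      · by_cases hj0 : j = 0
        · subst hj0
          simp only [if_neg hjn, if_pos rfl]
          rw [image_subset_iff]
          refine Subset.trans ?_ hεy
          intro z hz
          rw [mem_cylinder_iff_dist_le] at hz
          refine Metric.mem_ball.2 (lt_of_le_of_lt ?_ (hk.trans_le (min_le_right _ _)))
          refine hz.trans ?_
          apply pow_le_pow_of_le_one (by norm_num) (by norm_num) hL0
        · simp only [if_neg hjn, if_neg hj0]
          exact subset_univ _
    · intro j
      by_cases hjn : j = n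
      · simp only [if_pos hjn]; exact u_open.measurableSet
      · by_cases hj0 : j = 0
        · simp only [if_neg hjn, if_pos hj0]; exact v_open.measurableSet
        · simp only [if_neg hjn, if_neg hj0]; exact MeasurableSet.univ
    · ext z
      simp only [mem_iInter, mem_empty_iff_false, iff_false]
      intro hz
      have h1 := hz n
      simp only [if_pos rfl] at h1
      have h2 := hz 0
      rw [if_neg (Ne.symm hn0), if_pos rfl] at h2
      exact (disjoint_left.1 huv) h1 h2

end Novikov

end FBER



namespace FBER2

universe u

section MinGraph

variable {X : Type u} [MeasurableSpace X] [StandardBorelSpace X]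
  {f : X → ℝ}

/-- If the min-graph of `B` is measurable and sections are finite, the projection of `B`
is measurable. -/
lemma proj_meas {Y : Type*} [MeasurableSpace Y] [StandardBorelSpace Y]
    (hfi : Function.Injective f) {B : Set (Y × X)}
    (hBfin : ∀ y, {x | (y, x) ∈ B}.Finite)
    (hmin : MeasurableSet {p : Y × X | p ∈ B ∧ ∀ z, (p.1, z) ∈ B → f p.2 ≤ f z}) :
    MeasurableSet (Prod.fst '' B) := by
  have heq : Prod.fst '' B
      = Prod.fst '' {p : Y × X | p ∈ B ∧ ∀ z, (p.1, z) ∈ B → f p.2 ≤ f z} := by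
    apply Subset.antisymm
    · rintro y ⟨p, hp, rfl⟩
      obtain ⟨a, ha, hamin⟩ := Set.exists_min_image _ f (hBfin p.1) ⟨p.2, hp⟩
      exact ⟨(p.1, a), ⟨ha, fun z hz => hamin z hz⟩, rfl⟩
    · exact image_mono fun p hp => hp.1
  rw [heq]
  apply MeasurableSet.image_of_measurable_injOn hmin measurable_fst
  rintro p ⟨hp, hpmin⟩ q ⟨hq, hqmin⟩ hpq
  have h1 : f p.2 ≤ f q.2 := hpmin q.2 (by rw [hpq]; exact hq)
  have h2 : f q.2 ≤ f p.2 := hqmin p.2 (by rw [← hpq]; exact hp)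
  have : p.2 = q.2 := hfi (le_antisymm h1 h2)
  exact Prod.ext hpq this

/-- The min-graph of a Borel set with finite sections of uniformly bounded size is Borel. -/
lemma minGr_meas (hf : Measurable f) (hfi : Function.Injective f) (n : ℕ) :
    ∀ {Y : Type u} [MeasurableSpace Y] [StandardBorelSpace Y] (B : Set (Y × X)),
      MeasurableSet B → (∀ y, {x | (y, x) ∈ B}.Finite) →
      (∀ y, {x | (y, x) ∈ B}.ncard ≤ n) →
      MeasurableSet {p : Y × X | p ∈ B ∧ ∀ z, (p.1, z) ∈ B → f p.2 ≤ f z} := by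
  induction n with
  | zero =>
    intro Y _ _ B hB hfin hcard
    have hBempty : B = ∅ := by
      ext p
      simp only [mem_empty_iff_false, iff_false]
      intro hp
      have h0 : {x | (p.1, x) ∈ B} = ∅ :=
        (Set.ncard_eq_zero (hfin p.1)).1 (Nat.le_zero.1 (hcard p.1))
      have : p.2 ∈ {x | (p.1, x) ∈ B} := hp
      rw [h0] at this
      exact this
    subst hBempty
    have h0 : {p : Y × X | p ∈ (∅ : Set (Y × X))
        ∧ ∀ z, (p.1, z) ∈ (∅ : Set (Y × X)) → f p.2 ≤ f z} = ∅ := by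
      ext p
      simp
    rw [h0]
    exact MeasurableSet.empty
  | succ n IH =>
    intro Y _ _ B hB hfin hcard
    -- the auxiliary set over the base `Y × X`
    set C : Set ((Y × X) × X) := {q | q.1 ∈ B ∧ (q.1.1, q.2) ∈ B ∧ q.2 ≠ q.1.2} with hCdef
    have hCsub : ∀ a : Y × X, {z | (a, z) ∈ C} ⊆ {x | (a.1, x) ∈ B} := by
      rintro a z ⟨-, hz, -⟩
      exact hz
    have hCfin : ∀ a : Y × X, {z | (a, z) ∈ C}.Finite :=
      fun a => (hfin a.1).subset (hCsub a)
    have hCcard : ∀ a : Y × X, {z | (a, z) ∈ C}.ncard ≤ n := by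
      intro a
      by_cases ha : a ∈ B
      · have hsub : {z | (a, z) ∈ C} ⊆ {x | (a.1, x) ∈ B} \ {a.2} := by
          rintro z ⟨-, hz1, hz2⟩
          exact ⟨hz1, hz2⟩
        have hle : {z | (a, z) ∈ C}.ncard ≤ ({x | (a.1, x) ∈ B} \ {a.2}).ncard :=
          Set.ncard_le_ncard hsub (hfin a.1).diff
        have hmem : a.2 ∈ {x | (a.1, x) ∈ B} := ha
        have hdiff : ({x | (a.1, x) ∈ B} \ {a.2}).ncard
            = {x | (a.1, x) ∈ B}.ncard - 1 :=
          Set.ncard_diff_singleton_of_mem hmem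
        have := hcard a.1
        omega
      · have : {z | (a, z) ∈ C} = ∅ := by
          ext z
          simp only [mem_empty_iff_false, iff_false]
          rintro ⟨h1, -, -⟩
          exact ha h1
        rw [this]
        simp
    have hC : MeasurableSet C := by
      have h1 : MeasurableSet {q : (Y × X) × X | q.1 ∈ B} :=
        hB.preimage measurable_fst
      have h2 : MeasurableSet {q : (Y × X) × X | (q.1.1, q.2) ∈ B} :=
        hB.preimage ((measurable_fst.comp measurable_fst).prodMk measurable_snd)
      have h3 : MeasurableSet {q : (Y × X) × X | q.2 ≠ q.1.2} := by
        have heqset : {q : (Y × X) × X | q.2 = q.1.2}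
            = {q : (Y × X) × X | f q.2 = f (q.1.2)} := by
          ext q
          exact ⟨fun h => congrArg f h, fun h => hfi h⟩
        have : MeasurableSet {q : (Y × X) × X | f q.2 = f (q.1.2)} :=
          measurableSet_eq_fun (hf.comp measurable_snd)
            (hf.comp (measurable_snd.comp measurable_fst))
        rw [show {q : (Y × X) × X | q.2 ≠ q.1.2}
            = {q : (Y × X) × X | q.2 = q.1.2}ᶜ from rfl, heqset]
        exact this.compl
      have hCeq : C = {q : (Y × X) × X | q.1 ∈ B}
          ∩ ({q : (Y × X) × X | (q.1.1, q.2) ∈ B} ∩ {q : (Y × X) × X | q.2 ≠ q.1.2}) := by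
        ext q
        simp only [hCdef, mem_setOf_eq, mem_inter_iff]
      rw [hCeq]
      exact h1.inter (h2.inter h3)
    -- min-graph of C, by the inductive hypothesis over the base Y × X
    have hM : MeasurableSet {q : (Y × X) × X | q ∈ C ∧ ∀ z, (q.1, z) ∈ C → f q.2 ≤ f z} :=
      IH C hC hCfin hCcard
    -- the projection of C
    have hD : MeasurableSet (Prod.fst '' C) := proj_meas hfi hCfin hM
    -- the decomposition of the min-graph of B
    have key : {p : Y × X | p ∈ B ∧ ∀ z, (p.1, z) ∈ B → f p.2 ≤ f z}
        = (B \ Prod.fst '' C) ∪ Prod.fst ''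
          ({q : (Y × X) × X | q ∈ C ∧ ∀ z, (q.1, z) ∈ C → f q.2 ≤ f z}
            ∩ {q | f q.1.2 < f q.2}) := by
      apply Subset.antisymm
      · rintro p ⟨hp, hpmin⟩
        by_cases hpD : p ∈ Prod.fst '' C
        · right
          have hne : {z | (p, z) ∈ C}.Nonempty := by
            obtain ⟨q, hq, rfl⟩ := hpD
            exact ⟨q.2, hq⟩
          obtain ⟨m, hm, hmmin⟩ := Set.exists_min_image _ f (hCfin p) hne
          refine ⟨(p, m), ⟨⟨hm, fun z hz => hmmin z hz⟩, ?_⟩, rfl⟩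
          obtain ⟨-, hm2, hm3⟩ := hm
          have h1 : f p.2 ≤ f m := hpmin m hm2
          have h2 : f p.2 ≠ f m := fun h => hm3 (hfi h.symm)
          exact lt_of_le_of_ne h1 h2
        · exact Or.inl ⟨hp, hpD⟩
      · rintro p (⟨hp, hpD⟩ | ⟨q, ⟨⟨hqC, hqmin⟩, hqlt⟩, rfl⟩)
        · refine ⟨hp, fun z hz => ?_⟩
          by_cases hzp : z = p.2
          · rw [hzp]
          · exact absurd ⟨(p, z), ⟨hp, hz, hzp⟩, rfl⟩ hpD
        · obtain ⟨hq1, -, -⟩ := hqC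
          refine ⟨hq1, fun z hz => ?_⟩
          by_cases hzp : z = q.1.2
          · rw [hzp]
          · have : (q.1, z) ∈ C := ⟨hq1, hz, hzp⟩
            exact le_of_lt (lt_of_lt_of_le hqlt (hqmin z this))
    rw [key]
    apply (hB.diff hD).union
    have hM' : MeasurableSet
        ({q : (Y × X) × X | q ∈ C ∧ ∀ z, (q.1, z) ∈ C → f q.2 ≤ f z}
          ∩ {q | f q.1.2 < f q.2}) := by
      apply hM.inter
      exact measurableSet_lt (hf.comp (measurable_snd.comp measurable_fst))
        (hf.comp measurable_snd)
    apply MeasurableSet.image_of_measurable_injOn hM' measurable_fst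
    rintro q ⟨⟨hqC, hqmin⟩, -⟩ q' ⟨⟨hq'C, hq'min⟩, -⟩ hqq'
    obtain ⟨ha1, ha2, ha3⟩ := hqC
    obtain ⟨hb1, hb2, hb3⟩ := hq'C
    have hq'2 : (q.1, q'.2) ∈ C := by
      refine ⟨ha1, ?_, ?_⟩
      · rw [hqq']; exact hb2
      · rw [hqq']; exact hb3
    have hq2 : (q'.1, q.2) ∈ C := by
      refine ⟨hb1, ?_, ?_⟩
      · rw [← hqq']; exact ha2
      · rw [← hqq']; exact ha3
    have h1 : f q.2 ≤ f q'.2 := hqmin q'.2 hq'2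
    have h2 : f q'.2 ≤ f q.2 := hq'min q.2 hq2
    exact Prod.ext hqq' (hfi (le_antisymm h1 h2))

end MinGraph

end FBER2

open Set Function MeasureTheory in
/-- A Borel equivalence relation with finite classes on a standard Borel space admits a
Borel fundamental domain: a Borel set meeting every equivalence class in exactly one
point. -/
theorem finite_borel_equivalence_relation_has_borel_fundamental_domain
    {X : Type*} [MeasurableSpace X] [StandardBorelSpace X]
    (E : X → X → Prop) (hE : Equivalence E)
    (hgraph : MeasurableSet {p : X × X | E p.1 p.2})
    (hfin : ∀ x, {y | E x y}.Finite) :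
    ∃ S : Set X, MeasurableSet S ∧ ∀ x : X, ∃! y, y ∈ S ∧ E x y := by
  classical
  obtain ⟨f, hf⟩ := exists_measurableEmbedding_real (α := X)
  letI := upgradeStandardBorel X
  -- the sets of points whose class has at least n elements, as analytic sets
  set D : ∀ n : ℕ, Set (X × (Fin n → X)) :=
    fun n => {p | (∀ i, E p.1 (p.2 i)) ∧ Function.Injective p.2} with hDdef
  have hD : ∀ n, MeasurableSet (D n) := by
    intro n
    have h1 : MeasurableSet {p : X × (Fin n → X) | ∀ i, E p.1 (p.2 i)} := by
      have : {p : X × (Fin n → X) | ∀ i, E p.1 (p.2 i)}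
          = ⋂ i, {p : X × (Fin n → X) | E p.1 (p.2 i)} := by
        ext p; simp
      rw [this]
      refine MeasurableSet.iInter fun i => ?_
      exact hgraph.preimage
        (measurable_fst.prodMk ((measurable_pi_apply i).comp measurable_snd))
    have h2 : MeasurableSet {p : X × (Fin n → X) | Function.Injective p.2} := by
      have : {p : X × (Fin n → X) | Function.Injective p.2}
          = ⋂ i, ⋂ j, {p : X × (Fin n → X) | i ≠ j → f (p.2 i) ≠ f (p.2 j)} := by
        ext p
        simp only [mem_setOf_eq, mem_iInter]
        constructor
        · intro hinj i j hij hEq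
          exact hij (hinj (hf.injective hEq))
        · intro h i j hEq
          by_contra hne
          exact h i j hne (congrArg f hEq)
      rw [this]
      refine MeasurableSet.iInter fun i => MeasurableSet.iInter fun j => ?_
      by_cases hij : i = j
      · have : {p : X × (Fin n → X) | i ≠ j → f (p.2 i) ≠ f (p.2 j)} = univ := by
          ext p; simp [hij]
        rw [this]; exact MeasurableSet.univ
      · have : {p : X × (Fin n → X) | i ≠ j → f (p.2 i) ≠ f (p.2 j)}
            = {p : X × (Fin n → X) | f (p.2 i) = f (p.2 j)}ᶜ := by
          ext p; simp [hij]
        rw [this]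
        exact (measurableSet_eq_fun
          (hf.measurable.comp ((measurable_pi_apply i).comp measurable_snd))
          (hf.measurable.comp ((measurable_pi_apply j).comp measurable_snd))).compl
    exact h1.inter h2
  set A : ℕ → Set X := fun n => Prod.fst '' D n with hAdef
  have hAana : ∀ n, AnalyticSet (A n) := fun n =>
    (hD n).analyticSet_image measurable_fst
  -- membership in A n means the class has at least n elements
  have hA_mem : ∀ n x, x ∈ A n ↔ n ≤ {y | E x y}.ncard := by
    intro n x
    constructor
    · rintro ⟨p, ⟨hp1, hp2⟩, rfl⟩
      have : (Finset.univ : Finset (Fin n)).card ≤ (hfin p.1).toFinset.card := by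
        apply Finset.card_le_card_of_injOn p.2
        · intro i _
          simp only [Finset.mem_coe, Set.Finite.mem_toFinset]
          exact hp1 i
        · intro i _ j _ hij
          exact hp2 hij
      rw [Set.ncard_eq_toFinset_card _ (hfin p.1)]
      simpa using this
    · intro hn
      obtain ⟨t, hts, htcard⟩ := Set.exists_subset_card_eq hn
      have htfin : t.Finite := (hfin x).subset hts
      haveI : Finite t := htfin.to_subtype
      have hcard : Nat.card t = n := by
        rw [Nat.card_coe_set_eq, htcard]
      let e : t ≃ Fin n := Finite.equivFinOfCardEq hcard
      refine ⟨(x, fun i => (e.symm i : X)), ⟨fun i => hts (e.symm i).2, ?_⟩, rfl⟩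
      intro i j hij
      have : e.symm i = e.symm j := Subtype.ext hij
      simpa using congrArg e this
  have hAempty : (⋂ n, A n) = ∅ := by
    ext x
    simp only [mem_iInter, mem_empty_iff_false, iff_false]
    intro hx
    have h1 := (hA_mem ({y | E x y}.ncard + 1) x).1 (hx _)
    omega
  -- Novikov separation
  obtain ⟨B, hAB, hBmeas, hBempty⟩ := FBER.sepFam_of_analyticSet hAana hAempty
  have hexB : ∀ x, ∃ n, x ∉ B n := by
    intro x
    by_contra hx
    push_neg at hx
    have : x ∈ ⋂ n, B n := mem_iInter.2 hx
    rw [hBempty] at this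
    exact this
  -- the measurable stratification by an upper bound for the class size
  set W : ℕ → Set X := fun m => {x | x ∉ B m ∧ ∀ k < m, x ∈ B k} with hWdef
  have hWmeas : ∀ m, MeasurableSet (W m) := by
    intro m
    have : W m = (B m)ᶜ ∩ ⋂ (k : Fin m), B k := by
      ext x
      simp only [hWdef, mem_setOf_eq, mem_inter_iff, mem_compl_iff, mem_iInter]
      constructor
      · rintro ⟨h1, h2⟩
        exact ⟨h1, fun k => h2 k k.2⟩
      · rintro ⟨h1, h2⟩
        exact ⟨h1, fun k hk => h2 ⟨k, hk⟩⟩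
    rw [this]
    exact (hBmeas m).compl.inter (MeasurableSet.iInter fun k => hBmeas k)
  have hWmem : ∀ x, ∃ m, x ∈ W m := by
    intro x
    have hex : ∃ n, x ∉ B n := hexB x
    refine ⟨Nat.find hex, ?_, ?_⟩
    · exact Nat.find_spec hex
    · intro k hk
      by_contra hxk
      exact Nat.find_min hex hk hxk
  have hWcard : ∀ m x, x ∈ W m → {y | E x y}.ncard ≤ m := by
    intro m x hx
    by_contra hc
    push_neg at hc
    exact hx.1 (hAB m ((hA_mem m x).2 (le_of_lt hc)))
  -- apply the bounded min-graph lemma on each stratum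
  set R : ℕ → Set (X × X) := fun m => {p | p.1 ∈ W m ∧ E p.1 p.2} with hRdef
  have hRmeas : ∀ m, MeasurableSet (R m) := fun m =>
    ((hWmeas m).preimage measurable_fst).inter hgraph
  have hRfin : ∀ m (y : X), {x | (y, x) ∈ R m}.Finite := by
    intro m y
    apply (hfin y).subset
    rintro x ⟨-, hx⟩
    exact hx
  have hRcard : ∀ m (y : X), {x | (y, x) ∈ R m}.ncard ≤ m := by
    intro m y
    by_cases hy : y ∈ W m
    · refine le_trans (Set.ncard_le_ncard ?_ (hfin y)) (hWcard m y hy)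
      rintro x ⟨-, hx⟩
      exact hx
    · have : {x | (y, x) ∈ R m} = ∅ := by
        ext x
        simp only [mem_empty_iff_false, iff_false]
        rintro ⟨h1, -⟩
        exact hy h1
      rw [this]
      simp
  have hMin : ∀ m, MeasurableSet
      {p : X × X | p ∈ R m ∧ ∀ z, (p.1, z) ∈ R m → f p.2 ≤ f z} := fun m =>
    FBER2.minGr_meas hf.measurable hf.injective m (R m) (hRmeas m) (hRfin m) (hRcard m)
  -- the fundamental domain
  refine ⟨⋃ m, (fun x => (x, x)) ⁻¹'
      {p : X × X | p ∈ R m ∧ ∀ z, (p.1, z) ∈ R m → f p.2 ≤ f z}, ?_, ?_⟩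
  · exact MeasurableSet.iUnion fun m =>
      (hMin m).preimage (measurable_id.prodMk measurable_id)
  · have hSiff : ∀ x : X, (x ∈ ⋃ m, (fun x => (x, x)) ⁻¹'
        {p : X × X | p ∈ R m ∧ ∀ z, (p.1, z) ∈ R m → f p.2 ≤ f z})
        ↔ ∀ z, E x z → f x ≤ f z := by
      intro x
      simp only [mem_iUnion, mem_preimage, mem_setOf_eq, hRdef]
      constructor
      · rintro ⟨m, ⟨⟨hxW, -⟩, hmin⟩⟩
        intro z hz
        exact hmin z ⟨hxW, hz⟩
      · intro h
        obtain ⟨m, hm⟩ := hWmem x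
        exact ⟨m, ⟨hm, hE.refl x⟩, fun z hz => h z hz.2⟩
    intro x
    obtain ⟨y, hy, hymin⟩ := Set.exists_min_image {y | E x y} f (hfin x) ⟨x, hE.refl x⟩
    refine ⟨y, ⟨(hSiff y).2 fun z hz => hymin z (hE.trans hy hz), hy⟩, ?_⟩
    rintro y' ⟨hy'S, hy'⟩
    have h1 : f y' ≤ f y := (hSiff y').1 hy'S y (hE.trans (hE.symm hy') hy)
    have h2 : f y ≤ f y' := hymin y' hy'
    exact hf.injective (le_antisymm h1 h2)
end
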